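/- arXiv:1302.6066 — 9 statements merged into one kernel-verified Lean document; each statement's English description precedes it below -/
import Mathlib

section
/- Define the mean volume of a pyramid (p₁,…,p₅) ∈ (ℝ³)⁵ as the average over its two triangulations: mvol(p) := (1/2)[vol(p₁,p₂,p₃,p₅) + vol(p₁,p₃,p₄,p₅) + vol(p₁,p₂,p₄,p₅) + vol(p₂,p₃,p₄,p₅)]. Then the gradient of mvol with respect to the standard inner product on (ℝ³)⁵ ≅ ℝ¹⁵ has partial gradients ∇_{p₁} mvol = (1/12)(ν(p₅,p₄,p₂) + ν(p₅,p₄,p₃,p₂)), ∇_{p₂} mvol = (1/12)(ν(p₅,p₁,p₃) + ν(p₅,p₁,p₄,p₃)), ∇_{p₃} mvol = (1/12)(ν(p₅,p₂,p₄) + ν(p₅,p₂,p₁,p₄)), ∇_{p₄} mvol = (1/12)(ν(p₅,p₃,p₁) + ν(p₅,p₃,p₂,p₁)), and ∇_{p₅} mvol = (1/6) ν(p₁,p₂,p₃,p₄). -/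
open scoped RealInnerProductSpace

noncomputable section

/-- Euclidean 3-space with the standard inner product. -/
abbrev E3 : Type := EuclideanSpace ℝ (Fin 3)

/-- The cross product on `ℝ³`. -/
def cross (a b : E3) : E3 :=
  WithLp.toLp 2 ![a 1 * b 2 - a 2 * b 1, a 2 * b 0 - a 0 * b 2, a 0 * b 1 - a 1 * b 0]

/-- `ν(a,b,c)` for a 3-cycle. -/
def nu3 (a b c : E3) : E3 := cross a b + cross b c + cross c a

/-- `ν(a,b,c,d)` for a 4-cycle. -/
def nu4 (a b c d : E3) : E3 := cross a b + cross b c + cross c d + cross d a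

/-- `ν(a,b,c,d,e)` for a 5-cycle. -/
def nu5 (a b c d e : E3) : E3 :=
  cross a b + cross b c + cross c d + cross d e + cross e a

/-- `ν(a,b,c,d,e,f)` for a 6-cycle. -/
def nu6 (a b c d e f : E3) : E3 :=
  cross a b + cross b c + cross c d + cross d e + cross e f + cross f a

/-- The signed volume of a tetrahedron. -/
def tvol (p₁ p₂ p₃ p₄ : E3) : ℝ :=
  (1 / 6) * ⟪cross (p₂ - p₁) (p₃ - p₁), p₄ - p₁⟫

/-- The point `(x, y, z)` of `ℝ³`. -/
def v3 (x y z : ℝ) : E3 := WithLp.toLp 2 ![x, y, z]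

/-- The mean volume of a pyramid: the average of the volumes over its two
triangulations. -/
def mvolPyr (p₁ p₂ p₃ p₄ p₅ : E3) : ℝ :=
  (1 / 2) * (tvol p₁ p₂ p₃ p₅ + tvol p₁ p₃ p₄ p₅ + tvol p₁ p₂ p₄ p₅ + tvol p₂ p₃ p₄ p₅)

theorem grad_key {E : Type} [NormedAddCommGroup E] [InnerProductSpace ℝ E] [CompleteSpace E]
    (g : E) (c : ℝ) (f : E → ℝ) (h : ∀ x, f x = ⟪g, x⟫ + c) (x : E) :
    gradient f x = g := by
  have hg : HasGradientAt f g x := by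
    rw [hasGradientAt_iff_hasFDerivAt]
    have hd : (InnerProductSpace.toDual ℝ E g : E →L[ℝ] ℝ) = innerSL ℝ g := by
      ext y; simp
    rw [hd, funext h]
    exact ((innerSL ℝ g).hasFDerivAt (x := x)).add_const c
  exact hg.gradient

theorem gradient_mvolPyr (p₁ p₂ p₃ p₄ p₅ : E3) :
    gradient (fun x : E3 => mvolPyr x p₂ p₃ p₄ p₅) p₁ =
        (12 : ℝ)⁻¹ • (nu3 p₅ p₄ p₂ + nu4 p₅ p₄ p₃ p₂) ∧
    gradient (fun x : E3 => mvolPyr p₁ x p₃ p₄ p₅) p₂ =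
        (12 : ℝ)⁻¹ • (nu3 p₅ p₁ p₃ + nu4 p₅ p₁ p₄ p₃) ∧
    gradient (fun x : E3 => mvolPyr p₁ p₂ x p₄ p₅) p₃ =
        (12 : ℝ)⁻¹ • (nu3 p₅ p₂ p₄ + nu4 p₅ p₂ p₁ p₄) ∧
    gradient (fun x : E3 => mvolPyr p₁ p₂ p₃ x p₅) p₄ =
        (12 : ℝ)⁻¹ • (nu3 p₅ p₃ p₁ + nu4 p₅ p₃ p₂ p₁) ∧
    gradient (fun x : E3 => mvolPyr p₁ p₂ p₃ p₄ x) p₅ =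
        (6 : ℝ)⁻¹ • nu4 p₁ p₂ p₃ p₄ := by
  refine ⟨?_, ?_, ?_, ?_, ?_⟩ <;>
    [apply grad_key _ (mvolPyr 0 p₂ p₃ p₄ p₅); apply grad_key _ (mvolPyr p₁ 0 p₃ p₄ p₅); apply grad_key _ (mvolPyr p₁ p₂ 0 p₄ p₅); apply grad_key _ (mvolPyr p₁ p₂ p₃ 0 p₅); apply grad_key _ (mvolPyr p₁ p₂ p₃ p₄ 0)] <;>
    (intro x
     simp only [mvolPyr, tvol, nu3, nu4, cross, PiLp.inner_apply, RCLike.inner_apply,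
       conj_trivial, Fin.sum_univ_three, PiLp.sub_apply, PiLp.add_apply, PiLp.smul_apply,
       PiLp.zero_apply, PiLp.toLp_apply, smul_eq_mul, Matrix.cons_val_zero, Matrix.cons_val_one,
       Matrix.head_cons, Matrix.cons_val_two, Matrix.tail_cons]
     ring)
end
end

section
/- Let n ≥ 2 and let X : (ℝ³)ⁿ → (ℝ³)ⁿ be translation invariant, i.e. X(p₁+c,…,pₙ+c) = X(p₁,…,pₙ) for all c ∈ ℝ³. Let p ∈ (ℝ³)ⁿ satisfy τ(p) = p and ‖p‖ = 1, and suppose X is differentiable where needed so that π is differentiable at p. Then the Fréchet derivative of π at p applied to X(p) vanishes, D(π)_p(X(p)) = 0, if and only if there exists λ ∈ ℝ with τ(X(p)) = λ p. -/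
open scoped RealInnerProductSpace

noncomputable section

/-- The translation-normalizing map `τ(p₁,…,pₙ) = (p₁ − pₙ, …, p_{n−1} − pₙ, 0)`. -/
def tauMap {n : ℕ} (p : PiLp 2 fun _ : Fin n => E3) : PiLp 2 fun _ : Fin n => E3 :=
  WithLp.toLp 2 fun i : Fin n =>
    if (i : ℕ) = n - 1 then 0 else p i - p ⟨n - 1, Nat.sub_lt i.pos Nat.one_pos⟩

/-- The map `π = σ ∘ τ`, where `σ` is radial projection to the unit sphere. -/
def piMap {n : ℕ} (p : PiLp 2 fun _ : Fin n => E3) : PiLp 2 fun _ : Fin n => E3 :=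
  ‖tauMap p‖⁻¹ • tauMap p


lemma sigma_deriv {F : Type*} [NormedAddCommGroup F] [InnerProductSpace ℝ F] (p : F)
    (hp : ‖p‖ = 1) :
    HasFDerivAt (fun x : F => ‖x‖⁻¹ • x)
      (ContinuousLinearMap.id ℝ F - (innerSL ℝ p).smulRight p) p := by
  have hsq : HasFDerivAt (fun x : F => ‖x‖ ^ 2) (2 • innerSL ℝ p) p := by
    simpa using (hasFDerivAt_id p).norm_sq
  have hsqrt : HasDerivAt Real.sqrt (1 / (2 * Real.sqrt (‖p‖ ^ 2))) (‖p‖ ^ 2) := by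
    apply Real.hasDerivAt_sqrt
    simp [hp]
  have hnorm : HasFDerivAt (fun x : F => ‖x‖) (innerSL ℝ p) p := by
    have := hsqrt.comp_hasFDerivAt p hsq
    have heq : (fun x : F => Real.sqrt (‖x‖ ^ 2)) = fun x : F => ‖x‖ := by
      funext x; rw [Real.sqrt_sq (norm_nonneg x)]
    rw [show Real.sqrt ∘ (fun x : F => ‖x‖ ^ 2) = fun x : F => ‖x‖ from heq ▸ rfl] at this
    refine this.congr_fderiv ?_
    ext v
    simp [hp]
  have hinv : HasFDerivAt (fun x : F => ‖x‖⁻¹) (-(innerSL ℝ p)) p := by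
    have hi : HasDerivAt (fun y : ℝ => y⁻¹) (-(‖p‖ ^ 2)⁻¹) ‖p‖ := by
      simpa using hasDerivAt_inv (by simp [hp] : ‖p‖ ≠ (0:ℝ))
    have := hi.comp_hasFDerivAt p hnorm
    refine this.congr_fderiv ?_
    ext v
    simp [hp]
  have := hinv.smul (hasFDerivAt_id p)
  refine this.congr_fderiv ?_
  · ext v
    simp [hp]
    module


instance piLpE3_continuousSMul (n : ℕ) : ContinuousSMul ℝ (PiLp 2 fun _ : Fin n => E3) := inferInstance

def tauCLM (n : ℕ) : (PiLp 2 fun _ : Fin n => E3) →L[ℝ] (PiLp 2 fun _ : Fin n => E3) :=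
  LinearMap.toContinuousLinearMap
    { toFun := tauMap
      map_add' := by
        intro p q
        ext i : 1
        simp only [tauMap, PiLp.add_apply, PiLp.toLp_apply]
        split
        · simp
        · abel
      map_smul' := by
        intro c p
        ext i : 1
        simp only [tauMap, PiLp.smul_apply, RingHom.id_apply, PiLp.toLp_apply]
        split
        · simp
        · simp [smul_sub] }

lemma piMap_hasFDerivAt (n : ℕ) (p : PiLp 2 fun _ : Fin n => E3)
    (hp : tauMap p = p) (hpnorm : ‖p‖ = 1) :
    HasFDerivAt (piMap (n := n))
      ((ContinuousLinearMap.id ℝ _ - (innerSL ℝ p).smulRight p).comp (tauCLM n)) p := by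
  have h1 : HasFDerivAt (tauCLM n) (tauCLM n) p := (tauCLM n).hasFDerivAt
  have h2 := sigma_deriv p hpnorm
  have h3 : (tauCLM n) p = p := hp
  have h2' : HasFDerivAt (fun x => ‖x‖⁻¹ • x)
      (ContinuousLinearMap.id ℝ _ - (innerSL ℝ p).smulRight p) ((tauCLM n) p) := by
    rw [h3]; exact h2
  exact h2'.comp p h1

theorem singularity_iff_radial (n : ℕ) (hn : 2 ≤ n)
    (X : (PiLp 2 fun _ : Fin n => E3) → PiLp 2 fun _ : Fin n => E3)
    (htrans : ∀ p (v : E3), X (p + (WithLp.equiv 2 (Fin n → E3)).symm (fun _ => v)) = X p)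
    (p : PiLp 2 fun _ : Fin n => E3) (hp : tauMap p = p) (hpnorm : ‖p‖ = 1)
    (hdiff : DifferentiableAt ℝ (piMap (n := n)) p) :
    fderiv ℝ (piMap (n := n)) p (X p) = 0 ↔ ∃ lam : ℝ, tauMap (X p) = lam • p := by
  have hD := (piMap_hasFDerivAt n p hp hpnorm).fderiv
  rw [hD]
  have happ : ((ContinuousLinearMap.id ℝ _ - (innerSL ℝ p).smulRight p).comp (tauCLM n)) (X p)
      = tauMap (X p) - (⟪p, tauMap (X p)⟫ : ℝ) • p := rfl
  rw [happ]
  constructor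
  · intro h
    exact ⟨⟪p, tauMap (X p)⟫, sub_eq_zero.mp h⟩
  · rintro ⟨lam, hl⟩
    rw [hl, real_inner_smul_right, real_inner_self_eq_norm_sq, hpnorm]
    simp
end
end

section
/- Let E be a finite-dimensional real inner product space, let f : E → ℝ be continuously differentiable, and define the projected gradient field Y(p) := ∇f(p) − ⟨∇f(p), p⟩ p on the unit sphere of E. Let γ : ℝ → E satisfy ‖γ(t)‖ = 1 for all t and either γ'(t) = Y(γ(t)) for all t, or γ'(t) = Ψ(∇f(γ(t))) − ⟨Ψ(∇f(γ(t))), γ(t)⟩ γ(t) for all t. Then (i) f ∘ γ is nondecreasing, and (ii) there exist a point p with ‖p‖ = 1 and Y(p) = 0 and a sequence tₙ → +∞ with γ(tₙ) → p, and likewise there exist a point q with ‖q‖ = 1 and Y(q) = 0 and a sequence sₙ → −∞ with γ(sₙ) → q. -/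
open scoped RealInnerProductSpace
open Filter

noncomputable section

open Classical in
/-- The normalization `Ψ(v) = v / √‖v‖` for `v ≠ 0`, `Ψ(0) = 0`. -/
def Psi {E : Type*} [NormedAddCommGroup E] [NormedSpace ℝ E] (v : E) : E :=
  if v = 0 then 0 else (Real.sqrt ‖v‖)⁻¹ • v

lemma Psi_eq {E : Type*} [NormedAddCommGroup E] [NormedSpace ℝ E] (v : E) :
    Psi v = (Real.sqrt ‖v‖)⁻¹ • v := by
  unfold Psi
  split_ifs with h
  · simp [h]
  · rfl

lemma inner_Y_eq {E : Type*} [NormedAddCommGroup E] [InnerProductSpace ℝ E]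
    (g q : E) (hq : ‖q‖ = 1) :
    ⟪g, g - ⟪g, q⟫ • q⟫ = ‖g - ⟪g, q⟫ • q‖ ^ 2 := by
  have hqq : ⟪q, q⟫ = (1 : ℝ) := by
    rw [real_inner_self_eq_norm_sq, hq]; norm_num
  rw [← real_inner_self_eq_norm_sq]
  simp only [inner_sub_left, inner_sub_right, real_inner_smul_left, real_inner_smul_right,
    real_inner_comm g q, hqq, mul_one]
  ring

lemma key_lemma {E : Type*} [NormedAddCommGroup E] [InnerProductSpace ℝ E]
    [FiniteDimensional ℝ E]
    (Y : E → E) (γ : ℝ → E) (hγ : ∀ t, ‖γ t‖ = 1)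
    (φ v : ℝ → ℝ) (hφ : ∀ t, HasDerivAt φ (v t) t)
    (hdiff : Tendsto (fun n : ℕ => φ ((n : ℝ) + 1) - φ n) atTop (nhds 0))
    (P : ∀ (p : E) (u : ℕ → ℝ), Tendsto (fun n => γ (u n)) atTop (nhds p) →
      Tendsto (fun n => v (u n)) atTop (nhds 0) → Y p = 0) :
    ∃ p : E, ‖p‖ = 1 ∧ Y p = 0 ∧ ∃ t : ℕ → ℝ,
      Tendsto t atTop atTop ∧ Tendsto (fun n => γ (t n)) atTop (nhds p) := by
  have hdφ : Differentiable ℝ φ := fun t => (hφ t).differentiableAt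
  have hcont : Continuous φ := hdφ.continuous
  have hc : ∀ n : ℕ, ∃ c ∈ Set.Ioo (n : ℝ) ((n : ℝ) + 1), v c = φ ((n : ℝ) + 1) - φ n := by
    intro n
    obtain ⟨c, hcmem, hvc⟩ := exists_hasDerivAt_eq_slope φ v
      (by linarith : (n : ℝ) < (n : ℝ) + 1) hcont.continuousOn (fun x _ => hφ x)
    refine ⟨c, hcmem, ?_⟩
    rw [hvc]; field_simp; ring
  choose c hcIoo hcv using hc
  have hcTop : Tendsto c atTop atTop :=
    tendsto_atTop_mono (fun n => (hcIoo n).1.le) tendsto_natCast_atTop_atTop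
  have hv0 : Tendsto (fun n => v (c n)) atTop (nhds 0) := by
    simpa only [hcv] using hdiff
  obtain ⟨p, hp, σ, hσ, hγp⟩ := (isCompact_sphere (0 : E) 1).tendsto_subseq
    (x := fun n => γ (c n)) (fun n => by simpa [mem_sphere_zero_iff_norm] using hγ (c n))
  refine ⟨p, by simpa [mem_sphere_zero_iff_norm] using hp,
    P p (fun n => c (σ n)) hγp (hv0.comp hσ.tendsto_atTop),
    fun n => c (σ n), hcTop.comp hσ.tendsto_atTop, hγp⟩

theorem flow_lines_start_and_end_at_singularities
    (E : Type*) [NormedAddCommGroup E] [InnerProductSpace ℝ E] [FiniteDimensional ℝ E]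
    (f : E → ℝ) (hf : ContDiff ℝ 1 f)
    (Y : E → E) (hY : ∀ p : E, Y p = gradient f p - ⟪gradient f p, p⟫ • p)
    (γ : ℝ → E) (hγ : ∀ t : ℝ, ‖γ t‖ = 1)
    (hflow : (∀ t : ℝ, HasDerivAt γ (Y (γ t)) t) ∨
      (∀ t : ℝ, HasDerivAt γ
        (Psi (gradient f (γ t)) - ⟪Psi (gradient f (γ t)), γ t⟫ • γ t) t)) :
    Monotone (f ∘ γ) ∧
    (∃ p : E, ‖p‖ = 1 ∧ Y p = 0 ∧ ∃ t : ℕ → ℝ,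
      Tendsto t atTop atTop ∧ Tendsto (fun n => γ (t n)) atTop (nhds p)) ∧
    (∃ q : E, ‖q‖ = 1 ∧ Y q = 0 ∧ ∃ s : ℕ → ℝ,
      Tendsto s atTop atBot ∧ Tendsto (fun n => γ (s n)) atTop (nhds q)) := by
  set g : E → E := gradient f with hgdef
  have hgC : Continuous g := by
    have : g = fun x => (InnerProductSpace.toDual ℝ E).symm (fderiv ℝ f x) := rfl
    rw [this]
    exact (InnerProductSpace.toDual ℝ E).symm.continuous.comp (hf.continuous_fderiv one_ne_zero)
  have hfd : Differentiable ℝ f := hf.differentiable one_ne_zero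
  have hfderiv : ∀ x y : E, fderiv ℝ f x y = ⟪g x, y⟫ := by
    intro x y
    rw [(hfd x).hasGradientAt.hasFDerivAt.fderiv, InnerProductSpace.toDual_apply_apply]
  have hYC : Continuous Y := by
    have : Y = fun p => g p - ⟪g p, p⟫ • p := funext hY
    rw [this]
    exact hgC.sub ((hgC.inner continuous_id).smul continuous_id)
  -- the derivative field and its properties
  have hinnerY : ∀ t : ℝ, ⟪g (γ t), Y (γ t)⟫ = ‖Y (γ t)‖ ^ 2 := by
    intro t; rw [hY]; exact inner_Y_eq (g (γ t)) (γ t) (hγ t)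
  obtain ⟨d, hd, hdnn, hP⟩ :
      ∃ d : ℝ → E, (∀ t, HasDerivAt γ (d t) t) ∧ (∀ t, 0 ≤ ⟪g (γ t), d t⟫) ∧
        (∀ (p : E) (u : ℕ → ℝ), Tendsto (fun n => γ (u n)) atTop (nhds p) →
          Tendsto (fun n => ⟪g (γ (u n)), d (u n)⟫) atTop (nhds 0) → Y p = 0) := by
    rcases hflow with h | h
    · refine ⟨fun t => Y (γ t), h, fun t => by rw [hinnerY]; positivity, ?_⟩
      intro p u hconv hv0
      have h1 : Tendsto (fun n => ‖Y (γ (u n))‖ ^ 2) atTop (nhds 0) := by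
        simpa only [hinnerY] using hv0
      have h2 : Tendsto (fun n => ‖Y (γ (u n))‖ ^ 2) atTop (nhds (‖Y p‖ ^ 2)) :=
        (((hYC.tendsto p).comp hconv).norm).pow 2
      have := tendsto_nhds_unique h2 h1
      have : ‖Y p‖ = 0 := by
        have := sq_eq_zero_iff.mp this
        exact this
      simpa using this
    · have hdform : ∀ t : ℝ,
          Psi (g (γ t)) - ⟪Psi (g (γ t)), γ t⟫ • γ t = (Real.sqrt ‖g (γ t)‖)⁻¹ • Y (γ t) := by
        intro t
        rw [Psi_eq, hY, real_inner_smul_left, smul_sub, smul_smul]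
      refine ⟨fun t => Psi (g (γ t)) - ⟪Psi (g (γ t)), γ t⟫ • γ t, h, ?_, ?_⟩
      · intro t
        show 0 ≤ ⟪g (γ t), Psi (g (γ t)) - ⟪Psi (g (γ t)), γ t⟫ • γ t⟫
        rw [hdform, real_inner_smul_right, hinnerY]
        positivity
      · intro p u hconv hv0
        by_cases hgp : g p = 0
        · rw [hY, hgp]; simp
        · have hsq : Real.sqrt ‖g p‖ ≠ 0 := by
            simp [Real.sqrt_ne_zero', norm_pos_iff, hgp]
          have ha : Tendsto (fun n => (Real.sqrt ‖g (γ (u n))‖)⁻¹) atTop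
              (nhds ((Real.sqrt ‖g p‖)⁻¹)) :=
            ((((Real.continuous_sqrt.comp hgC.norm).tendsto p).comp hconv)).inv₀ hsq
          have h2 : Tendsto (fun n => (Real.sqrt ‖g (γ (u n))‖)⁻¹ * ‖Y (γ (u n))‖ ^ 2) atTop
              (nhds ((Real.sqrt ‖g p‖)⁻¹ * ‖Y p‖ ^ 2)) :=
            ha.mul ((((hYC.tendsto p).comp hconv).norm).pow 2)
          have h1 : Tendsto (fun n => (Real.sqrt ‖g (γ (u n))‖)⁻¹ * ‖Y (γ (u n))‖ ^ 2) atTop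
              (nhds 0) := by
            have : ∀ n, ⟪g (γ (u n)), Psi (g (γ (u n))) - ⟪Psi (g (γ (u n))), γ (u n)⟫ • γ (u n)⟫
                = (Real.sqrt ‖g (γ (u n))‖)⁻¹ * ‖Y (γ (u n))‖ ^ 2 := by
              intro n
              rw [hdform, real_inner_smul_right, hinnerY]
            simpa only [this] using hv0
          have heq := tendsto_nhds_unique h2 h1
          have hpos : (0 : ℝ) < (Real.sqrt ‖g p‖)⁻¹ := by
            have : 0 < Real.sqrt ‖g p‖ := lt_of_le_of_ne (Real.sqrt_nonneg _) (Ne.symm hsq)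
            positivity
          have : ‖Y p‖ ^ 2 = 0 := by
            by_contra hne
            exact hne (by
              have := mul_eq_zero.mp heq
              rcases this with h' | h'
              · exact absurd h' (ne_of_gt hpos)
              · exact h')
          have : ‖Y p‖ = 0 := sq_eq_zero_iff.mp this
          simpa using this
  set v : ℝ → ℝ := fun t => ⟪g (γ t), d t⟫ with hvdef
  set φ : ℝ → ℝ := f ∘ γ with hφdef
  have hφ : ∀ t, HasDerivAt φ (v t) t := by
    intro t
    have := ((hfd (γ t)).hasFDerivAt.comp_hasDerivAt t (hd t))
    simpa [hφdef, hvdef, hfderiv] using this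
  have hmono : Monotone φ :=
    monotone_of_deriv_nonneg (fun t => (hφ t).differentiableAt)
      (fun t => by rw [(hφ t).deriv]; exact hdnn t)
  have hsub : Set.range φ ⊆ f '' Metric.sphere 0 1 := by
    rintro x ⟨t, rfl⟩
    exact ⟨γ t, by simp [mem_sphere_zero_iff_norm, hγ t], rfl⟩
  have hcomp : IsCompact (f '' Metric.sphere 0 1) :=
    (isCompact_sphere (0 : E) 1).image hf.continuous
  have hba : BddAbove (Set.range φ) := hcomp.bddAbove.mono hsub
  have hbb : BddBelow (Set.range φ) := hcomp.bddBelow.mono hsub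
  have hLtop : Tendsto φ atTop (nhds (⨆ t, φ t)) := tendsto_atTop_ciSup hmono hba
  have hLbot : Tendsto φ atBot (nhds (⨅ t, φ t)) := tendsto_atBot_ciInf hmono hbb
  have hnat : Tendsto (fun n : ℕ => (n : ℝ)) atTop atTop := tendsto_natCast_atTop_atTop
  have hnat1 : Tendsto (fun n : ℕ => (n : ℝ) + 1) atTop atTop :=
    tendsto_atTop_add_const_right _ 1 hnat
  refine ⟨hmono, ?_, ?_⟩
  · -- atTop direction
    have hdiff : Tendsto (fun n : ℕ => φ ((n : ℝ) + 1) - φ n) atTop (nhds 0) := by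
      have h1 := hLtop.comp hnat1
      have h2 := hLtop.comp hnat
      simpa using h1.sub h2
    obtain ⟨p, hp1, hp2, t, ht1, ht2⟩ := key_lemma Y γ hγ φ v hφ hdiff hP
    exact ⟨p, hp1, hp2, t, ht1, ht2⟩
  · -- atBot direction: reverse time
    set δ : ℝ → E := fun t => γ (-t) with hδdef
    set ψ : ℝ → ℝ := fun t => φ (-t) with hψdef
    set w : ℝ → ℝ := fun t => v (-t) * (-1) with hwdef
    have hψ : ∀ t, HasDerivAt ψ (w t) t := by
      intro t
      exact (hφ (-t)).comp t (hasDerivAt_neg t)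
    have hδnorm : ∀ t, ‖δ t‖ = 1 := fun t => hγ (-t)
    have hnegTop : Tendsto (fun n : ℕ => -(n : ℝ)) atTop atBot := by
      exact tendsto_neg_atBot_iff.mpr hnat
    have hnegTop1 : Tendsto (fun n : ℕ => -((n : ℝ) + 1)) atTop atBot := by
      exact tendsto_neg_atBot_iff.mpr hnat1
    have hdiff : Tendsto (fun n : ℕ => ψ ((n : ℝ) + 1) - ψ n) atTop (nhds 0) := by
      have h1 := hLbot.comp hnegTop1
      have h2 := hLbot.comp hnegTop
      simpa [hψdef, Function.comp] using h1.sub h2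
    have hP' : ∀ (p : E) (u : ℕ → ℝ), Tendsto (fun n => δ (u n)) atTop (nhds p) →
        Tendsto (fun n => w (u n)) atTop (nhds 0) → Y p = 0 := by
      intro p u hconv hw0
      refine hP p (fun n => -(u n)) hconv ?_
      have := hw0.neg
      simpa [hwdef] using this
    obtain ⟨q, hq1, hq2, s', hs'1, hs'2⟩ := key_lemma Y δ hδnorm ψ w hψ hdiff hP'
    refine ⟨q, hq1, hq2, fun n => -(s' n), ?_, hs'2⟩
    exact tendsto_neg_atBot_iff.mpr hs'1
end
end

section
/- Let q₁, q₂, q₃, q₄ ∈ ℝ³ be non-collinear points and suppose there exists λ ≠ 0 and c ∈ ℝ³ such that ν(q₄,q₃,q₂) = λ q₁ + c, ν(q₄,q₁,q₃) = λ q₂ + c, ν(q₄,q₂,q₁) = λ q₃ + c, and ν(q₁,q₂,q₃) = λ q₄ + c. Then the tetrahedron (q₁,q₂,q₃,q₄) is regular: all six edge lengths ‖q_i − q_j‖ for i ≠ j are equal. -/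
open scoped RealInnerProductSpace

noncomputable section

private lemma nu3₀ (a b c : E3) : nu3 a b c 0 =
    a 1 * b 2 - a 2 * b 1 + (b 1 * c 2 - b 2 * c 1) + (c 1 * a 2 - c 2 * a 1) := by
  simp [nu3, cross]

private lemma nu3₁ (a b c : E3) : nu3 a b c 1 =
    a 2 * b 0 - a 0 * b 2 + (b 2 * c 0 - b 0 * c 2) + (c 2 * a 0 - c 0 * a 2) := by
  simp [nu3, cross]

private lemma nu3₂ (a b c : E3) : nu3 a b c 2 =
    a 0 * b 1 - a 1 * b 0 + (b 0 * c 1 - b 1 * c 0) + (c 0 * a 1 - c 1 * a 0) := by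
  simp [nu3, cross]

private lemma norm_eq_of_sum_sq (a b : E3) (h : (∑ i, (a i)^2 : ℝ) = ∑ i, (b i)^2) :
    ‖a‖ = ‖b‖ := by
  rw [EuclideanSpace.norm_eq, EuclideanSpace.norm_eq]
  congr 1
  simpa [Real.norm_eq_abs, sq_abs] using h

theorem optimal_tetrahedron_is_regular (q₁ q₂ q₃ q₄ : E3)
    (hnc : ¬ Collinear ℝ ({q₁, q₂, q₃, q₄} : Set E3))
    (lam : ℝ) (hlam : lam ≠ 0) (c : E3)
    (h₁ : nu3 q₄ q₃ q₂ = lam • q₁ + c)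
    (h₂ : nu3 q₄ q₁ q₃ = lam • q₂ + c)
    (h₃ : nu3 q₄ q₂ q₁ = lam • q₃ + c)
    (h₄ : nu3 q₁ q₂ q₃ = lam • q₄ + c) :
    ‖q₁ - q₂‖ = ‖q₁ - q₃‖ ∧ ‖q₁ - q₂‖ = ‖q₁ - q₄‖ ∧ ‖q₁ - q₂‖ = ‖q₂ - q₃‖ ∧
      ‖q₁ - q₂‖ = ‖q₂ - q₄‖ ∧ ‖q₁ - q₂‖ = ‖q₃ - q₄‖ := by
  have hE1 : ∀ i, nu3 q₄ q₃ q₂ i = lam * q₁ i + c i := fun i => by rw [h₁]; rfl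
  have e10 := (nu3₀ q₄ q₃ q₂).symm.trans (hE1 0)
  have e11 := (nu3₁ q₄ q₃ q₂).symm.trans (hE1 1)
  have e12 := (nu3₂ q₄ q₃ q₂).symm.trans (hE1 2)
  have hE2 : ∀ i, nu3 q₄ q₁ q₃ i = lam * q₂ i + c i := fun i => by rw [h₂]; rfl
  have e20 := (nu3₀ q₄ q₁ q₃).symm.trans (hE2 0)
  have e21 := (nu3₁ q₄ q₁ q₃).symm.trans (hE2 1)
  have e22 := (nu3₂ q₄ q₁ q₃).symm.trans (hE2 2)
  have hE3 : ∀ i, nu3 q₄ q₂ q₁ i = lam * q₃ i + c i := fun i => by rw [h₃]; rfl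
  have e30 := (nu3₀ q₄ q₂ q₁).symm.trans (hE3 0)
  have e31 := (nu3₁ q₄ q₂ q₁).symm.trans (hE3 1)
  have e32 := (nu3₂ q₄ q₂ q₁).symm.trans (hE3 2)
  have hE4 : ∀ i, nu3 q₁ q₂ q₃ i = lam * q₄ i + c i := fun i => by rw [h₄]; rfl
  have e40 := (nu3₀ q₁ q₂ q₃).symm.trans (hE4 0)
  have e41 := (nu3₁ q₁ q₂ q₃).symm.trans (hE4 1)
  have e42 := (nu3₂ q₁ q₂ q₃).symm.trans (hE4 2)
  have g13 : ‖q₁ - q₂‖ = ‖q₁ - q₃‖ := by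
    apply norm_eq_of_sum_sq
    simp only [Fin.sum_univ_three, PiLp.sub_apply]
    refine mul_left_cancel₀ hlam ?_
    linear_combination -((q₁ 0 - q₂ 0) * (e10 - e20) + (q₁ 1 - q₂ 1) * (e11 - e21) + (q₁ 2 - q₂ 2) * (e12 - e22)) +
      ((q₁ 0 - q₃ 0) * (e10 - e30) + (q₁ 1 - q₃ 1) * (e11 - e31) + (q₁ 2 - q₃ 2) * (e12 - e32))
  have g14 : ‖q₁ - q₂‖ = ‖q₁ - q₄‖ := by
    apply norm_eq_of_sum_sq
    simp only [Fin.sum_univ_three, PiLp.sub_apply]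
    refine mul_left_cancel₀ hlam ?_
    linear_combination -((q₁ 0 - q₂ 0) * (e10 - e20) + (q₁ 1 - q₂ 1) * (e11 - e21) + (q₁ 2 - q₂ 2) * (e12 - e22)) +
      ((q₁ 0 - q₄ 0) * (e10 - e40) + (q₁ 1 - q₄ 1) * (e11 - e41) + (q₁ 2 - q₄ 2) * (e12 - e42))
  have g23 : ‖q₁ - q₂‖ = ‖q₂ - q₃‖ := by
    apply norm_eq_of_sum_sq
    simp only [Fin.sum_univ_three, PiLp.sub_apply]
    refine mul_left_cancel₀ hlam ?_
    linear_combination -((q₁ 0 - q₂ 0) * (e10 - e20) + (q₁ 1 - q₂ 1) * (e11 - e21) + (q₁ 2 - q₂ 2) * (e12 - e22)) +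
      ((q₂ 0 - q₃ 0) * (e20 - e30) + (q₂ 1 - q₃ 1) * (e21 - e31) + (q₂ 2 - q₃ 2) * (e22 - e32))
  have g24 : ‖q₁ - q₂‖ = ‖q₂ - q₄‖ := by
    apply norm_eq_of_sum_sq
    simp only [Fin.sum_univ_three, PiLp.sub_apply]
    refine mul_left_cancel₀ hlam ?_
    linear_combination -((q₁ 0 - q₂ 0) * (e10 - e20) + (q₁ 1 - q₂ 1) * (e11 - e21) + (q₁ 2 - q₂ 2) * (e12 - e22)) +
      ((q₂ 0 - q₄ 0) * (e20 - e40) + (q₂ 1 - q₄ 1) * (e21 - e41) + (q₂ 2 - q₄ 2) * (e22 - e42))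
  have g34 : ‖q₁ - q₂‖ = ‖q₃ - q₄‖ := by
    apply norm_eq_of_sum_sq
    simp only [Fin.sum_univ_three, PiLp.sub_apply]
    refine mul_left_cancel₀ hlam ?_
    linear_combination -((q₁ 0 - q₂ 0) * (e10 - e20) + (q₁ 1 - q₂ 1) * (e11 - e21) + (q₁ 2 - q₂ 2) * (e12 - e22)) +
      ((q₃ 0 - q₄ 0) * (e30 - e40) + (q₃ 1 - q₄ 1) * (e31 - e41) + (q₃ 2 - q₄ 2) * (e32 - e42))
  exact ⟨g13, g14, g23, g24, g34⟩
end
end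

section
/- Let q₁,…,q₅ ∈ ℝ³ be non-collinear and X-optimal for the pyramid gradient field X, i.e. there exist λ ≠ 0 and c ∈ ℝ³ with X_i(q) = λ q_i + c for i = 1,…,5. Then the base is a planar square with the apex orthogonally above its center: q₁ + q₃ = q₂ + q₄, the four base sides have equal length ‖q₂−q₁‖ = ‖q₃−q₂‖ = ‖q₄−q₃‖ = ‖q₁−q₄‖, adjacent sides are orthogonal, (q₂−q₁)·(q₄−q₁) = 0, and q₅ − (q₁+q₂+q₃+q₄)/4 is orthogonal to both q₂−q₁ and q₄−q₁. -/
open scoped RealInnerProductSpace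

noncomputable section

set_option maxHeartbeats 2000000
theorem optimal_pyramid_square_base (q₁ q₂ q₃ q₄ q₅ : E3)
    (hnc : ¬ Collinear ℝ ({q₁, q₂, q₃, q₄, q₅} : Set E3))
    (lam : ℝ) (hlam : lam ≠ 0) (c : E3)
    (h₁ : (1 / 2 : ℝ) • (nu3 q₅ q₄ q₂ + nu4 q₅ q₄ q₃ q₂) = lam • q₁ + c)
    (h₂ : (1 / 2 : ℝ) • (nu3 q₅ q₁ q₃ + nu4 q₅ q₁ q₄ q₃) = lam • q₂ + c)
    (h₃ : (1 / 2 : ℝ) • (nu3 q₅ q₂ q₄ + nu4 q₅ q₂ q₁ q₄) = lam • q₃ + c)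
    (h₄ : (1 / 2 : ℝ) • (nu3 q₅ q₃ q₁ + nu4 q₅ q₃ q₂ q₁) = lam • q₄ + c)
    (h₅ : nu4 q₁ q₂ q₃ q₄ = lam • q₅ + c) :
    q₁ + q₃ = q₂ + q₄ ∧
    ‖q₂ - q₁‖ = ‖q₃ - q₂‖ ∧ ‖q₃ - q₂‖ = ‖q₄ - q₃‖ ∧ ‖q₄ - q₃‖ = ‖q₁ - q₄‖ ∧
    ⟪q₂ - q₁, q₄ - q₁⟫ = 0 ∧
    ⟪q₅ - (4 : ℝ)⁻¹ • (q₁ + q₂ + q₃ + q₄), q₂ - q₁⟫ = 0 ∧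
    ⟪q₅ - (4 : ℝ)⁻¹ • (q₁ + q₂ + q₃ + q₄), q₄ - q₁⟫ = 0 := by
  -- coordinate equations
  have a10 := congrArg (fun v : E3 => v 0) h₁
  have a11 := congrArg (fun v : E3 => v 1) h₁
  have a12 := congrArg (fun v : E3 => v 2) h₁
  have a20 := congrArg (fun v : E3 => v 0) h₂
  have a21 := congrArg (fun v : E3 => v 1) h₂
  have a22 := congrArg (fun v : E3 => v 2) h₂
  have a30 := congrArg (fun v : E3 => v 0) h₃
  have a31 := congrArg (fun v : E3 => v 1) h₃
  have a32 := congrArg (fun v : E3 => v 2) h₃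
  have a40 := congrArg (fun v : E3 => v 0) h₄
  have a41 := congrArg (fun v : E3 => v 1) h₄
  have a42 := congrArg (fun v : E3 => v 2) h₄
  simp only [nu3, nu4, cross, PiLp.toLp_apply, PiLp.add_apply, PiLp.smul_apply, smul_eq_mul,
    Matrix.cons_val_zero, Matrix.cons_val_one, Matrix.head_cons,
    Matrix.cons_val_two, Matrix.tail_cons] at a10 a11 a12 a20 a21 a22 a30 a31 a32 a40 a41 a42
  -- parallelogram
  have k0 : lam * (q₁ 0 + q₃ 0 - q₂ 0 - q₄ 0) = 0 := by
    linear_combination a20 + a40 - a10 - a30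
  have k1 : lam * (q₁ 1 + q₃ 1 - q₂ 1 - q₄ 1) = 0 := by
    linear_combination a21 + a41 - a11 - a31
  have k2 : lam * (q₁ 2 + q₃ 2 - q₂ 2 - q₄ 2) = 0 := by
    linear_combination a22 + a42 - a12 - a32
  have e0 : q₄ 0 = q₁ 0 + q₃ 0 - q₂ 0 := by
    have := (mul_eq_zero.mp k0).resolve_left hlam; linarith
  have e1 : q₄ 1 = q₁ 1 + q₃ 1 - q₂ 1 := by
    have := (mul_eq_zero.mp k1).resolve_left hlam; linarith
  have e2 : q₄ 2 = q₁ 2 + q₃ 2 - q₂ 2 := by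
    have := (mul_eq_zero.mp k2).resolve_left hlam; linarith
  have hs : q₄ = q₁ + q₃ - q₂ := by
    ext i
    fin_cases i
    · simpa using e0
    · simpa using e1
    · simpa using e2
  subst hs
  simp only [PiLp.add_apply, PiLp.sub_apply] at a10 a11 a12 a20 a21 a22 a30 a31 a32 a40 a41 a42
  -- the four key scalar facts
  have klamdf : lam * ((q₃ 0 - q₁ 0) * (q₁ 0 + q₃ 0 - 2*q₂ 0)
      + (q₃ 1 - q₁ 1) * (q₁ 1 + q₃ 1 - 2*q₂ 1)
      + (q₃ 2 - q₁ 2) * (q₁ 2 + q₃ 2 - 2*q₂ 2)) = 0 := by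
    linear_combination (q₁ 0 + q₃ 0 - 2*q₂ 0) * (a10 - a30)
      + (q₁ 1 + q₃ 1 - 2*q₂ 1) * (a11 - a31)
      + (q₁ 2 + q₃ 2 - 2*q₂ 2) * (a12 - a32)
  have klampd : lam * ((q₅ 0 - (q₁ 0 + q₃ 0)/2) * (q₃ 0 - q₁ 0)
      + (q₅ 1 - (q₁ 1 + q₃ 1)/2) * (q₃ 1 - q₁ 1)
      + (q₅ 2 - (q₁ 2 + q₃ 2)/2) * (q₃ 2 - q₁ 2)) = 0 := by
    linear_combination (q₅ 0 - (q₁ 0 + q₃ 0)/2) * (a10 - a30)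
      + (q₅ 1 - (q₁ 1 + q₃ 1)/2) * (a11 - a31)
      + (q₅ 2 - (q₁ 2 + q₃ 2)/2) * (a12 - a32)
  have klampf : lam * ((q₅ 0 - (q₁ 0 + q₃ 0)/2) * (q₁ 0 + q₃ 0 - 2*q₂ 0)
      + (q₅ 1 - (q₁ 1 + q₃ 1)/2) * (q₁ 1 + q₃ 1 - 2*q₂ 1)
      + (q₅ 2 - (q₁ 2 + q₃ 2)/2) * (q₁ 2 + q₃ 2 - 2*q₂ 2)) = 0 := by
    linear_combination (q₅ 0 - (q₁ 0 + q₃ 0)/2) * (a20 - a40)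
      + (q₅ 1 - (q₁ 1 + q₃ 1)/2) * (a21 - a41)
      + (q₅ 2 - (q₁ 2 + q₃ 2)/2) * (a22 - a42)
  have klamdd : lam * (((q₃ 0 - q₁ 0)^2 + (q₃ 1 - q₁ 1)^2 + (q₃ 2 - q₁ 2)^2)
      - ((q₁ 0 + q₃ 0 - 2*q₂ 0)^2 + (q₁ 1 + q₃ 1 - 2*q₂ 1)^2 + (q₁ 2 + q₃ 2 - 2*q₂ 2)^2)) = 0 := by
    linear_combination (q₃ 0 - q₁ 0) * (a10 - a30) + (q₃ 1 - q₁ 1) * (a11 - a31)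
      + (q₃ 2 - q₁ 2) * (a12 - a32)
      + (q₁ 0 + q₃ 0 - 2*q₂ 0) * (a40 - a20) + (q₁ 1 + q₃ 1 - 2*q₂ 1) * (a41 - a21)
      + (q₁ 2 + q₃ 2 - 2*q₂ 2) * (a42 - a22)
  have hdf := (mul_eq_zero.mp klamdf).resolve_left hlam
  have hpd := (mul_eq_zero.mp klampd).resolve_left hlam
  have hpf := (mul_eq_zero.mp klampf).resolve_left hlam
  have hdd := (mul_eq_zero.mp klamdd).resolve_left hlam
  clear a10 a11 a12 a20 a21 a22 a30 a31 a32 a40 a41 a42 klamdf klampd klampf klamdd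
    k0 k1 k2 e0 e1 e2 h₁ h₂ h₃ h₄ h₅ hnc
  have nrm : ∀ x : E3, ‖x‖ = Real.sqrt ((x 0)^2 + (x 1)^2 + (x 2)^2) := by
    intro x; rw [EuclideanSpace.norm_eq]; simp [Fin.sum_univ_three, sq]
  have inr : ∀ x y : E3, ⟪x, y⟫ = x 0 * y 0 + x 1 * y 1 + x 2 * y 2 := by
    intro x y; simp [PiLp.inner_apply, Fin.sum_univ_three]; ring
  refine ⟨by ext i; simp only [PiLp.add_apply, PiLp.sub_apply]; ring, ?_, ?_, ?_, ?_, ?_, ?_⟩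
  · rw [nrm, nrm]
    congr 1
    simp only [PiLp.sub_apply, PiLp.add_apply]
    linear_combination -hdf
  · rw [nrm, nrm]
    congr 1
    simp only [PiLp.sub_apply, PiLp.add_apply]
    linear_combination hdf
  · rw [nrm, nrm]
    congr 1
    simp only [PiLp.sub_apply, PiLp.add_apply]
    linear_combination -hdf
  · rw [inr]
    simp only [PiLp.sub_apply, PiLp.add_apply]
    linear_combination (1/4 : ℝ) * hdd
  · rw [inr]
    simp only [PiLp.sub_apply, PiLp.add_apply, PiLp.smul_apply, smul_eq_mul]
    linear_combination (1/2 : ℝ) * hpd - (1/2 : ℝ) * hpf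
  · rw [inr]
    simp only [PiLp.sub_apply, PiLp.add_apply, PiLp.smul_apply, smul_eq_mul]
    linear_combination (1/2 : ℝ) * hpd + (1/2 : ℝ) * hpf
end
end

section
/- Let q₁,…,q₅ ∈ ℝ³ be non-collinear and X-optimal for the pyramid gradient field X, i.e. there exist λ ≠ 0 and c ∈ ℝ³ with X_i(q) = λ q_i + c for i = 1,…,5. Then (q₁,…,q₅) is similar to the model pyramid: there exist r > 0, an orthogonal linear map R of ℝ³, and b ∈ ℝ³ such that q₁ = r·R(0,0,0) + b, q₂ = r·R(2,0,0) + b, q₃ = r·R(2,2,0) + b, q₄ = r·R(0,2,0) + b, and q₅ = r·R(1,1,√5) + b. -/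
open scoped RealInnerProductSpace

noncomputable section

set_option maxHeartbeats 12000000

private lemma pyr_eq3 (x y : E3) (h0 : x 0 = y 0) (h1 : x 1 = y 1) (h2 : x 2 = y 2) :
    x = y := by
  ext i; fin_cases i <;> assumption

private lemma pyr_sqz (x : ℝ) (h : x^2 ≤ 0) : x = 0 := by
  have h0 : x^2 = 0 := le_antisymm h (sq_nonneg x)
  exact pow_eq_zero_iff (two_ne_zero) |>.mp h0

private lemma pyr_inner3 (x y : E3) : ⟪x, y⟫ = x 0 * y 0 + x 1 * y 1 + x 2 * y 2 := by
  simp [PiLp.inner_apply, RCLike.inner_apply, conj_trivial, Fin.sum_univ_three]; ring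

private lemma pyr_cross_inner_left (x y : E3) : ⟪cross x y, x⟫ = 0 := by
  simp [pyr_inner3, cross, PiLp.toLp_apply, Fin.sum_univ_three]; ring

private lemma pyr_cross_inner_right (x y : E3) : ⟪cross x y, y⟫ = 0 := by
  simp [pyr_inner3, cross, PiLp.toLp_apply, Fin.sum_univ_three]; ring

private lemma pyr_cross_lagrange (x y : E3) :
    ⟪cross x y, cross x y⟫ = ⟪x,x⟫*⟪y,y⟫ - ⟪x,y⟫^2 := by
  simp only [pyr_inner3, cross, PiLp.toLp_apply, Matrix.cons_val_zero, Matrix.cons_val_one, Matrix.cons_val_two, Matrix.head_cons, Matrix.tail_cons]; ring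

private lemma pyr_cross_smul_left (r : ℝ) (x y : E3) : cross (r • x) y = r • cross x y := by
  ext i; fin_cases i <;> simp [cross, PiLp.toLp_apply, PiLp.smul_apply, smul_eq_mul] <;> ring

private lemma pyr_cross_smul_right (r : ℝ) (x y : E3) : cross x (r • y) = r • cross x y := by
  ext i; fin_cases i <;> simp [cross, PiLp.toLp_apply, PiLp.smul_apply, smul_eq_mul] <;> ring

private lemma pyr_core (a0 a1 a2 b0 b1 b2 h0 h1 h2 lam : ℝ) (hlam : lam ≠ 0)
    (hne : a0^2+a1^2+a2^2+b0^2+b1^2+b2^2 ≠ 0)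
    (I0 : 2*(h1*(b2-a2) - h2*(b1-a1)) + lam*(a0+b0) = 0)
    (I1 : 2*(h2*(b0-a0) - h0*(b2-a2)) + lam*(a1+b1) = 0)
    (I2 : 2*(h0*(b1-a1) - h1*(b0-a0)) + lam*(a2+b2) = 0)
    (J0 : 2*(h1*(a2+b2) - h2*(a1+b1)) - lam*(b0-a0) = 0)
    (J1 : 2*(h2*(a0+b0) - h0*(a2+b2)) - lam*(b1-a1) = 0)
    (J2 : 2*(h0*(a1+b1) - h1*(a0+b0)) - lam*(b2-a2) = 0)
    (V0 : 5*(a1*b2-a2*b1) = 2*lam*h0)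
    (V1 : 5*(a2*b0-a0*b2) = 2*lam*h1)
    (V2 : 5*(a0*b1-a1*b0) = 2*lam*h2) :
    (a0*b0+a1*b1+a2*b2 = 0) ∧ (b0^2+b1^2+b2^2 = a0^2+a1^2+a2^2) ∧
      (a0^2+a1^2+a2^2 ≠ 0) ∧ (lam^2 = 5*(a0^2+a1^2+a2^2)) := by
  have hl2 : 0 < lam^2 := by positivity
  have hbb : b0^2+b1^2+b2^2 = a0^2+a1^2+a2^2 := by
    have key : lam * ((b0^2+b1^2+b2^2) - (a0^2+a1^2+a2^2)) = 0 := by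
      linear_combination (b0-a0)*I0 + (b1-a1)*I1 + (b2-a2)*I2
    have := (mul_eq_zero.mp key).resolve_left hlam
    linarith
  have h2l : (2:ℝ)*lam ≠ 0 := by simpa using hlam
  have hha : h0*a0+h1*a1+h2*a2 = 0 := by
    have key : 2*lam*(h0*a0+h1*a1+h2*a2) = 0 := by
      linear_combination (-a0)*V0 - a1*V1 - a2*V2
    exact (mul_eq_zero.mp key).resolve_left h2l
  have hhb : h0*b0+h1*b1+h2*b2 = 0 := by
    have key : 2*lam*(h0*b0+h1*b1+h2*b2) = 0 := by
      linear_combination (-b0)*V0 - b1*V1 - b2*V2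
    exact (mul_eq_zero.mp key).resolve_left h2l
  have E2 : 4*(h0^2+h1^2+h2^2)*((a0+b0)^2+(a1+b1)^2+(a2+b2)^2)
      = lam^2*((b0-a0)^2+(b1-a1)^2+(b2-a2)^2) := by
    linear_combination (2*(h1*(a2+b2) - h2*(a1+b1)) + lam*(b0-a0))*J0
      + (2*(h2*(a0+b0) - h0*(a2+b2)) + lam*(b1-a1))*J1
      + (2*(h0*(a1+b1) - h1*(a0+b0)) + lam*(b2-a2))*J2
      + (4*(h0*(a0+b0)+h1*(a1+b1)+h2*(a2+b2)))*hha
      + (4*(h0*(a0+b0)+h1*(a1+b1)+h2*(a2+b2)))*hhb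
  have E1 : 4*(h0^2+h1^2+h2^2)*((b0-a0)^2+(b1-a1)^2+(b2-a2)^2)
      = lam^2*((a0+b0)^2+(a1+b1)^2+(a2+b2)^2) := by
    linear_combination (2*(h1*(b2-a2) - h2*(b1-a1)) - lam*(a0+b0))*I0
      + (2*(h2*(b0-a0) - h0*(b2-a2)) - lam*(a1+b1))*I1
      + (2*(h0*(b1-a1) - h1*(b0-a0)) - lam*(a2+b2))*I2
      + (4*(h0*(b0-a0)+h1*(b1-a1)+h2*(b2-a2)))*hhb
      + (-(4*(h0*(b0-a0)+h1*(b1-a1)+h2*(b2-a2))))*hha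
  have hSD : (a0+b0)^2+(a1+b1)^2+(a2+b2)^2 = (b0-a0)^2+(b1-a1)^2+(b2-a2)^2 := by
    have key : (4*(h0^2+h1^2+h2^2) + lam^2) *
        (((a0+b0)^2+(a1+b1)^2+(a2+b2)^2) - ((b0-a0)^2+(b1-a1)^2+(b2-a2)^2)) = 0 := by
      linear_combination E2 - E1
    have hpos : (0:ℝ) < 4*(h0^2+h1^2+h2^2) + lam^2 := by positivity
    have := (mul_eq_zero.mp key).resolve_left (ne_of_gt hpos)
    linarith
  have hab : a0*b0+a1*b1+a2*b2 = 0 := by linear_combination (1/4)*hSD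
  have hane : a0^2+a1^2+a2^2 ≠ 0 := by
    intro hQ0
    exact hne (by linear_combination hbb + 2*hQ0)
  have hSQ : (a0+b0)^2+(a1+b1)^2+(a2+b2)^2 = 2*(a0^2+a1^2+a2^2) := by
    linear_combination hbb + 2*hab
  have hSne : (a0+b0)^2+(a1+b1)^2+(a2+b2)^2 ≠ 0 := by
    rw [hSQ]; intro hh; exact hane (by linarith)
  have h4H : 4*(h0^2+h1^2+h2^2) = lam^2 := by
    have key : (4*(h0^2+h1^2+h2^2) - lam^2)*((a0+b0)^2+(a1+b1)^2+(a2+b2)^2) = 0 := by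
      linear_combination E2 - lam^2*hSD
    have := (mul_eq_zero.mp key).resolve_right hSne
    linarith
  have hVsq : 25*((a0^2+a1^2+a2^2)*(b0^2+b1^2+b2^2) - (a0*b0+a1*b1+a2*b2)^2)
      = 4*lam^2*(h0^2+h1^2+h2^2) := by
    linear_combination (5*(a1*b2-a2*b1)+2*lam*h0)*V0 + (5*(a2*b0-a0*b2)+2*lam*h1)*V1
      + (5*(a0*b1-a1*b0)+2*lam*h2)*V2
  have hl4 : lam^2*lam^2 - 25*(a0^2+a1^2+a2^2)^2 = 0 := by
    linear_combination (25*(a0^2+a1^2+a2^2))*hbb + (-25*(a0*b0+a1*b1+a2*b2))*hab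
      + (-1)*hVsq + (-(lam^2))*h4H
  have hlam5 : lam^2 = 5*(a0^2+a1^2+a2^2) := by
    have key : (lam^2 - 5*(a0^2+a1^2+a2^2))*(lam^2 + 5*(a0^2+a1^2+a2^2)) = 0 := by
      linear_combination hl4
    have hQnn : (0:ℝ) ≤ a0^2+a1^2+a2^2 := by positivity
    have hpos : (0:ℝ) < lam^2 + 5*(a0^2+a1^2+a2^2) := by nlinarith
    have := (mul_eq_zero.mp key).resolve_right (ne_of_gt hpos)
    linarith
  exact ⟨hab, hbb, hane, hlam5⟩

theorem optimal_pyramid_similar_to_model (q₁ q₂ q₃ q₄ q₅ : E3)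
    (hnc : ¬ Collinear ℝ ({q₁, q₂, q₃, q₄, q₅} : Set E3))
    (lam : ℝ) (hlam : lam ≠ 0) (c : E3)
    (h₁ : (1 / 2 : ℝ) • (nu3 q₅ q₄ q₂ + nu4 q₅ q₄ q₃ q₂) = lam • q₁ + c)
    (h₂ : (1 / 2 : ℝ) • (nu3 q₅ q₁ q₃ + nu4 q₅ q₁ q₄ q₃) = lam • q₂ + c)
    (h₃ : (1 / 2 : ℝ) • (nu3 q₅ q₂ q₄ + nu4 q₅ q₂ q₁ q₄) = lam • q₃ + c)
    (h₄ : (1 / 2 : ℝ) • (nu3 q₅ q₃ q₁ + nu4 q₅ q₃ q₂ q₁) = lam • q₄ + c)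
    (h₅ : nu4 q₁ q₂ q₃ q₄ = lam • q₅ + c) :
    ∃ (r : ℝ) (_ : 0 < r) (R : E3 ≃ₗᵢ[ℝ] E3) (b : E3),
      q₁ = r • R (v3 0 0 0) + b ∧
      q₂ = r • R (v3 2 0 0) + b ∧
      q₃ = r • R (v3 2 2 0) + b ∧
      q₄ = r • R (v3 0 2 0) + b ∧
      q₅ = r • R (v3 1 1 (Real.sqrt 5)) + b := by
  classical
  -- Step 1: q₃ = q₂ + q₄ - q₁ (the base is a parallelogram)
  have hq3 : q₃ = q₂ + q₄ - q₁ := by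
    apply pyr_eq3
    · have f1 := congrFun (congrArg WithLp.ofLp h₁) (0 : Fin 3)
      have f2 := congrFun (congrArg WithLp.ofLp h₂) (0 : Fin 3)
      have f3 := congrFun (congrArg WithLp.ofLp h₃) (0 : Fin 3)
      have f4 := congrFun (congrArg WithLp.ofLp h₄) (0 : Fin 3)
      simp only [nu3, nu4, cross, PiLp.toLp_apply, PiLp.add_apply, PiLp.smul_apply, smul_eq_mul,
        Matrix.cons_val_zero, Matrix.cons_val_one, Matrix.head_cons, Matrix.cons_val_two,
        Matrix.tail_cons] at f1 f2 f3 f4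
      have key : lam * (q₁ 0 - q₂ 0 + q₃ 0 - q₄ 0) = 0 := by
        linear_combination f2 - f1 + f4 - f3
      have := (mul_eq_zero.mp key).resolve_left hlam
      show q₃ 0 = (q₂ + q₄ - q₁) 0
      simp only [PiLp.add_apply, PiLp.sub_apply]
      linarith
    · have f1 := congrFun (congrArg WithLp.ofLp h₁) (1 : Fin 3)
      have f2 := congrFun (congrArg WithLp.ofLp h₂) (1 : Fin 3)
      have f3 := congrFun (congrArg WithLp.ofLp h₃) (1 : Fin 3)
      have f4 := congrFun (congrArg WithLp.ofLp h₄) (1 : Fin 3)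
      simp only [nu3, nu4, cross, PiLp.toLp_apply, PiLp.add_apply, PiLp.smul_apply, smul_eq_mul,
        Matrix.cons_val_zero, Matrix.cons_val_one, Matrix.head_cons, Matrix.cons_val_two,
        Matrix.tail_cons] at f1 f2 f3 f4
      have key : lam * (q₁ 1 - q₂ 1 + q₃ 1 - q₄ 1) = 0 := by
        linear_combination f2 - f1 + f4 - f3
      have := (mul_eq_zero.mp key).resolve_left hlam
      show q₃ 1 = (q₂ + q₄ - q₁) 1
      simp only [PiLp.add_apply, PiLp.sub_apply]
      linarith
    · have f1 := congrFun (congrArg WithLp.ofLp h₁) (2 : Fin 3)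
      have f2 := congrFun (congrArg WithLp.ofLp h₂) (2 : Fin 3)
      have f3 := congrFun (congrArg WithLp.ofLp h₃) (2 : Fin 3)
      have f4 := congrFun (congrArg WithLp.ofLp h₄) (2 : Fin 3)
      simp only [nu3, nu4, cross, PiLp.toLp_apply, PiLp.add_apply, PiLp.smul_apply, smul_eq_mul,
        Matrix.cons_val_zero, Matrix.cons_val_one, Matrix.head_cons, Matrix.cons_val_two,
        Matrix.tail_cons] at f1 f2 f3 f4
      have key : lam * (q₁ 2 - q₂ 2 + q₃ 2 - q₄ 2) = 0 := by
        linear_combination f2 - f1 + f4 - f3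
      have := (mul_eq_zero.mp key).resolve_left hlam
      show q₃ 2 = (q₂ + q₄ - q₁) 2
      simp only [PiLp.add_apply, PiLp.sub_apply]
      linarith
  subst hq3
  have E10 := congrFun (congrArg WithLp.ofLp h₁) (0 : Fin 3)
  have E11 := congrFun (congrArg WithLp.ofLp h₁) (1 : Fin 3)
  have E12 := congrFun (congrArg WithLp.ofLp h₁) (2 : Fin 3)
  have E20 := congrFun (congrArg WithLp.ofLp h₂) (0 : Fin 3)
  have E21 := congrFun (congrArg WithLp.ofLp h₂) (1 : Fin 3)
  have E22 := congrFun (congrArg WithLp.ofLp h₂) (2 : Fin 3)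
  have E30 := congrFun (congrArg WithLp.ofLp h₃) (0 : Fin 3)
  have E31 := congrFun (congrArg WithLp.ofLp h₃) (1 : Fin 3)
  have E32 := congrFun (congrArg WithLp.ofLp h₃) (2 : Fin 3)
  have E40 := congrFun (congrArg WithLp.ofLp h₄) (0 : Fin 3)
  have E41 := congrFun (congrArg WithLp.ofLp h₄) (1 : Fin 3)
  have E42 := congrFun (congrArg WithLp.ofLp h₄) (2 : Fin 3)
  have E50 := congrFun (congrArg WithLp.ofLp h₅) (0 : Fin 3)
  have E51 := congrFun (congrArg WithLp.ofLp h₅) (1 : Fin 3)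
  have E52 := congrFun (congrArg WithLp.ofLp h₅) (2 : Fin 3)
  simp only [nu3, nu4, cross, PiLp.toLp_apply, PiLp.add_apply, PiLp.sub_apply, PiLp.smul_apply, smul_eq_mul,
    Matrix.cons_val_zero, Matrix.cons_val_one, Matrix.head_cons, Matrix.cons_val_two,
    Matrix.tail_cons] at E10 E11 E12 E20 E21 E22 E30 E31 E32 E40 E41 E42 E50 E51 E52
  have I0 : 2*((q₅ 1 - q₁ 1 - ((q₂ 1 - q₁ 1) + (q₄ 1 - q₁ 1))/2)*((q₄ 2 - q₁ 2)-(q₂ 2 - q₁ 2)) - (q₅ 2 - q₁ 2 - ((q₂ 2 - q₁ 2) + (q₄ 2 - q₁ 2))/2)*((q₄ 1 - q₁ 1)-(q₂ 1 - q₁ 1))) + lam*((q₂ 0 - q₁ 0)+(q₄ 0 - q₁ 0)) = 0 := by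
    linear_combination E10 - E30
  have J0 : 2*((q₅ 1 - q₁ 1 - ((q₂ 1 - q₁ 1) + (q₄ 1 - q₁ 1))/2)*((q₂ 2 - q₁ 2)+(q₄ 2 - q₁ 2)) - (q₅ 2 - q₁ 2 - ((q₂ 2 - q₁ 2) + (q₄ 2 - q₁ 2))/2)*((q₂ 1 - q₁ 1)+(q₄ 1 - q₁ 1))) - lam*((q₄ 0 - q₁ 0)-(q₂ 0 - q₁ 0)) = 0 := by
    linear_combination E40 - E20
  have V0 : 5*((q₂ 1 - q₁ 1)*(q₄ 2 - q₁ 2)-(q₂ 2 - q₁ 2)*(q₄ 1 - q₁ 1)) = 2*lam*(q₅ 0 - q₁ 0 - ((q₂ 0 - q₁ 0) + (q₄ 0 - q₁ 0))/2) := by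
    linear_combination 2*E50 - E10 - E20 + (1/2)*I0 - (1/2)*J0
  have I1 : 2*((q₅ 2 - q₁ 2 - ((q₂ 2 - q₁ 2) + (q₄ 2 - q₁ 2))/2)*((q₄ 0 - q₁ 0)-(q₂ 0 - q₁ 0)) - (q₅ 0 - q₁ 0 - ((q₂ 0 - q₁ 0) + (q₄ 0 - q₁ 0))/2)*((q₄ 2 - q₁ 2)-(q₂ 2 - q₁ 2))) + lam*((q₂ 1 - q₁ 1)+(q₄ 1 - q₁ 1)) = 0 := by
    linear_combination E11 - E31
  have J1 : 2*((q₅ 2 - q₁ 2 - ((q₂ 2 - q₁ 2) + (q₄ 2 - q₁ 2))/2)*((q₂ 0 - q₁ 0)+(q₄ 0 - q₁ 0)) - (q₅ 0 - q₁ 0 - ((q₂ 0 - q₁ 0) + (q₄ 0 - q₁ 0))/2)*((q₂ 2 - q₁ 2)+(q₄ 2 - q₁ 2))) - lam*((q₄ 1 - q₁ 1)-(q₂ 1 - q₁ 1)) = 0 := by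
    linear_combination E41 - E21
  have V1 : 5*((q₂ 2 - q₁ 2)*(q₄ 0 - q₁ 0)-(q₂ 0 - q₁ 0)*(q₄ 2 - q₁ 2)) = 2*lam*(q₅ 1 - q₁ 1 - ((q₂ 1 - q₁ 1) + (q₄ 1 - q₁ 1))/2) := by
    linear_combination 2*E51 - E11 - E21 + (1/2)*I1 - (1/2)*J1
  have I2 : 2*((q₅ 0 - q₁ 0 - ((q₂ 0 - q₁ 0) + (q₄ 0 - q₁ 0))/2)*((q₄ 1 - q₁ 1)-(q₂ 1 - q₁ 1)) - (q₅ 1 - q₁ 1 - ((q₂ 1 - q₁ 1) + (q₄ 1 - q₁ 1))/2)*((q₄ 0 - q₁ 0)-(q₂ 0 - q₁ 0))) + lam*((q₂ 2 - q₁ 2)+(q₄ 2 - q₁ 2)) = 0 := by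
    linear_combination E12 - E32
  have J2 : 2*((q₅ 0 - q₁ 0 - ((q₂ 0 - q₁ 0) + (q₄ 0 - q₁ 0))/2)*((q₂ 1 - q₁ 1)+(q₄ 1 - q₁ 1)) - (q₅ 1 - q₁ 1 - ((q₂ 1 - q₁ 1) + (q₄ 1 - q₁ 1))/2)*((q₂ 0 - q₁ 0)+(q₄ 0 - q₁ 0))) - lam*((q₄ 2 - q₁ 2)-(q₂ 2 - q₁ 2)) = 0 := by
    linear_combination E42 - E22
  have V2 : 5*((q₂ 0 - q₁ 0)*(q₄ 1 - q₁ 1)-(q₂ 1 - q₁ 1)*(q₄ 0 - q₁ 0)) = 2*lam*(q₅ 2 - q₁ 2 - ((q₂ 2 - q₁ 2) + (q₄ 2 - q₁ 2))/2) := by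
    linear_combination 2*E52 - E12 - E22 + (1/2)*I2 - (1/2)*J2
  clear E10 E11 E12 E20 E21 E22 E30 E31 E32 E40 E41 E42 E50 E51 E52 h₁ h₂ h₃ h₄ h₅
  have h2l : (2:ℝ)*lam ≠ 0 := by simpa using hlam
  -- Degenerate case: q₂ = q₁ and q₄ = q₁ forces all points equal, contradicting hnc
  by_cases hdeg : q₂ = q₁ ∧ q₄ = q₁
  · exfalso
    obtain ⟨hq2, hq4⟩ := hdeg
    rw [hq2, hq4] at V0 V1 V2
    have hq5 : q₅ = q₁ := by
      apply pyr_eq3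
      · have key : 2*lam*(q₅ 0 - q₁ 0) = 0 := by linear_combination -V0
        have := (mul_eq_zero.mp key).resolve_left h2l; linarith
      · have key : 2*lam*(q₅ 1 - q₁ 1) = 0 := by linear_combination -V1
        have := (mul_eq_zero.mp key).resolve_left h2l; linarith
      · have key : 2*lam*(q₅ 2 - q₁ 2) = 0 := by linear_combination -V2
        have := (mul_eq_zero.mp key).resolve_left h2l; linarith
    apply hnc
    have hset : ({q₁, q₂, q₂ + q₄ - q₁, q₄, q₅} : Set E3) = {q₁} := by
      rw [hq2, hq4, hq5]
      simp
    rw [hset]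
    exact collinear_singleton ℝ q₁
  · -- Main case
    have hne : (q₂ 0 - q₁ 0)^2+(q₂ 1 - q₁ 1)^2+(q₂ 2 - q₁ 2)^2
        +(q₄ 0 - q₁ 0)^2+(q₄ 1 - q₁ 1)^2+(q₄ 2 - q₁ 2)^2 ≠ 0 := by
      intro hs
      apply hdeg
      have z20 : q₂ 0 - q₁ 0 = 0 := pyr_sqz _ (by linarith [sq_nonneg (q₂ 0 - q₁ 0), sq_nonneg (q₂ 1 - q₁ 1), sq_nonneg (q₂ 2 - q₁ 2), sq_nonneg (q₄ 0 - q₁ 0), sq_nonneg (q₄ 1 - q₁ 1), sq_nonneg (q₄ 2 - q₁ 2)])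
      have z21 : q₂ 1 - q₁ 1 = 0 := pyr_sqz _ (by linarith [sq_nonneg (q₂ 0 - q₁ 0), sq_nonneg (q₂ 1 - q₁ 1), sq_nonneg (q₂ 2 - q₁ 2), sq_nonneg (q₄ 0 - q₁ 0), sq_nonneg (q₄ 1 - q₁ 1), sq_nonneg (q₄ 2 - q₁ 2)])
      have z22 : q₂ 2 - q₁ 2 = 0 := pyr_sqz _ (by linarith [sq_nonneg (q₂ 0 - q₁ 0), sq_nonneg (q₂ 1 - q₁ 1), sq_nonneg (q₂ 2 - q₁ 2), sq_nonneg (q₄ 0 - q₁ 0), sq_nonneg (q₄ 1 - q₁ 1), sq_nonneg (q₄ 2 - q₁ 2)])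
      have z40 : q₄ 0 - q₁ 0 = 0 := pyr_sqz _ (by linarith [sq_nonneg (q₂ 0 - q₁ 0), sq_nonneg (q₂ 1 - q₁ 1), sq_nonneg (q₂ 2 - q₁ 2), sq_nonneg (q₄ 0 - q₁ 0), sq_nonneg (q₄ 1 - q₁ 1), sq_nonneg (q₄ 2 - q₁ 2)])
      have z41 : q₄ 1 - q₁ 1 = 0 := pyr_sqz _ (by linarith [sq_nonneg (q₂ 0 - q₁ 0), sq_nonneg (q₂ 1 - q₁ 1), sq_nonneg (q₂ 2 - q₁ 2), sq_nonneg (q₄ 0 - q₁ 0), sq_nonneg (q₄ 1 - q₁ 1), sq_nonneg (q₄ 2 - q₁ 2)])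
      have z42 : q₄ 2 - q₁ 2 = 0 := pyr_sqz _ (by linarith [sq_nonneg (q₂ 0 - q₁ 0), sq_nonneg (q₂ 1 - q₁ 1), sq_nonneg (q₂ 2 - q₁ 2), sq_nonneg (q₄ 0 - q₁ 0), sq_nonneg (q₄ 1 - q₁ 1), sq_nonneg (q₄ 2 - q₁ 2)])
      exact ⟨pyr_eq3 _ _ (by linarith) (by linarith) (by linarith),
        pyr_eq3 _ _ (by linarith) (by linarith) (by linarith)⟩
    obtain ⟨hab, hbb, hane, hlam5⟩ :=
      pyr_core (q₂ 0 - q₁ 0) (q₂ 1 - q₁ 1) (q₂ 2 - q₁ 2)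
        (q₄ 0 - q₁ 0) (q₄ 1 - q₁ 1) (q₄ 2 - q₁ 2)
        (q₅ 0 - q₁ 0 - ((q₂ 0 - q₁ 0) + (q₄ 0 - q₁ 0))/2)
        (q₅ 1 - q₁ 1 - ((q₂ 1 - q₁ 1) + (q₄ 1 - q₁ 1))/2)
        (q₅ 2 - q₁ 2 - ((q₂ 2 - q₁ 2) + (q₄ 2 - q₁ 2))/2)
        lam hlam hne I0 I1 I2 J0 J1 J2 V0 V1 V2
    -- vector-level facts
    have hIPab : ⟪q₂ - q₁, q₄ - q₁⟫ = 0 := by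
      rw [pyr_inner3]; simp only [PiLp.sub_apply]; linear_combination hab
    have hIPbb : ⟪q₄ - q₁, q₄ - q₁⟫ = ⟪q₂ - q₁, q₂ - q₁⟫ := by
      rw [pyr_inner3, pyr_inner3]; simp only [PiLp.sub_apply]; linear_combination hbb
    set na : ℝ := ‖q₂ - q₁‖ with hna
    have hna2 : ⟪q₂ - q₁, q₂ - q₁⟫ = na^2 := real_inner_self_eq_norm_sq _
    have hQcomp : ⟪q₂ - q₁, q₂ - q₁⟫
        = (q₂ 0 - q₁ 0)^2+(q₂ 1 - q₁ 1)^2+(q₂ 2 - q₁ 2)^2 := by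
      rw [pyr_inner3]; simp only [PiLp.sub_apply]; ring
    have hsub_ne : q₂ - q₁ ≠ 0 := by
      intro h0
      apply hane
      have k0 := congrFun (congrArg WithLp.ofLp h0) (0 : Fin 3)
      have k1 := congrFun (congrArg WithLp.ofLp h0) (1 : Fin 3)
      have k2 := congrFun (congrArg WithLp.ofLp h0) (2 : Fin 3)
      simp only [PiLp.sub_apply, PiLp.zero_apply] at k0 k1 k2
      linear_combination (q₂ 0 - q₁ 0)*k0 + (q₂ 1 - q₁ 1)*k1 + (q₂ 2 - q₁ 2)*k2
    have hnapos : 0 < na := by rw [hna]; exact norm_pos_iff.mpr hsub_ne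
    have hnane : na ≠ 0 := ne_of_gt hnapos
    have hlam2 : lam^2 = 5*na^2 := by rw [← hna2, hQcomp]; exact hlam5
    -- the vector identity V
    have hV : (5:ℝ) • cross (q₂ - q₁) (q₄ - q₁)
        = (2*lam) • (q₅ - q₁ - (2⁻¹:ℝ) • ((q₂ - q₁) + (q₄ - q₁))) := by
      apply pyr_eq3 <;>
      · simp only [cross, PiLp.toLp_apply, PiLp.add_apply, PiLp.sub_apply, PiLp.smul_apply, smul_eq_mul,
          Matrix.cons_val_zero, Matrix.cons_val_one, Matrix.head_cons, Matrix.cons_val_two,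
          Matrix.tail_cons]
        first
        | linear_combination V0
        | linear_combination V1
        | linear_combination V2
    clear I0 I1 I2 J0 J1 J2 V0 V1 V2 hab hbb
    -- orthonormal frame
    obtain ⟨e₁, he₁⟩ : ∃ v : E3, v = na⁻¹ • (q₂ - q₁) := ⟨_, rfl⟩
    obtain ⟨e₂, he₂⟩ : ∃ v : E3, v = na⁻¹ • (q₄ - q₁) := ⟨_, rfl⟩
    obtain ⟨E, hE⟩ : ∃ v : E3, v = cross e₁ e₂ := ⟨_, rfl⟩
    obtain ⟨σ, hσ⟩ : ∃ s : ℝ, s = if 0 < lam then (1:ℝ) else -1 := ⟨_, rfl⟩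
    obtain ⟨e₃, he₃⟩ : ∃ v : E3, v = σ • E := ⟨_, rfl⟩
    have hσ2 : σ * σ = 1 := by rw [hσ]; split <;> norm_num
    have s11 : ⟪e₁, e₁⟫ = 1 := by
      rw [he₁, real_inner_smul_left, real_inner_smul_right, hna2]
      field_simp [hnane]
      try ring
    have s22 : ⟪e₂, e₂⟫ = 1 := by
      rw [he₂, real_inner_smul_left, real_inner_smul_right, hIPbb, hna2]
      field_simp [hnane]
      try ring
    have s12 : ⟪e₁, e₂⟫ = 0 := by
      rw [he₁, he₂, real_inner_smul_left, real_inner_smul_right, hIPab]; ring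
    have s21 : ⟪e₂, e₁⟫ = 0 := by rw [real_inner_comm]; exact s12
    have sEE : ⟪E, E⟫ = 1 := by rw [hE, pyr_cross_lagrange, s11, s22, s12]; ring
    have sE1 : ⟪E, e₁⟫ = 0 := by rw [hE]; exact pyr_cross_inner_left _ _
    have sE2 : ⟪E, e₂⟫ = 0 := by rw [hE]; exact pyr_cross_inner_right _ _
    have s33 : ⟪e₃, e₃⟫ = 1 := by
      rw [he₃, real_inner_smul_left, real_inner_smul_right, sEE]
      rw [mul_one]; exact hσ2
    have s13 : ⟪e₁, e₃⟫ = 0 := by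
      rw [he₃, real_inner_smul_right, real_inner_comm, sE1, mul_zero]
    have s31 : ⟪e₃, e₁⟫ = 0 := by rw [real_inner_comm]; exact s13
    have s23 : ⟪e₂, e₃⟫ = 0 := by
      rw [he₃, real_inner_smul_right, real_inner_comm, sE2, mul_zero]
    have s32 : ⟪e₃, e₂⟫ = 0 := by rw [real_inner_comm]; exact s23
    have onb : Orthonormal ℝ ![e₁, e₂, e₃] := by
      rw [orthonormal_iff_ite]
      intro i j
      fin_cases i <;> fin_cases j <;>
        simp [s11, s22, s33, s12, s21, s13, s31, s23, s32,
          (by rw [norm_eq_sqrt_real_inner, s11, Real.sqrt_one] : ‖e₁‖ = 1),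
          (by rw [norm_eq_sqrt_real_inner, s22, Real.sqrt_one] : ‖e₂‖ = 1),
          (by rw [norm_eq_sqrt_real_inner, s33, Real.sqrt_one] : ‖e₃‖ = 1)]
    have card_eq : Fintype.card (Fin 3) = Module.finrank ℝ E3 := by
      simp [finrank_euclideanSpace_fin]
    set B0 := basisOfLinearIndependentOfCardEqFinrank onb.linearIndependent card_eq with hB0def
    have hB0 : ⇑B0 = ![e₁, e₂, e₃] := coe_basisOfLinearIndependentOfCardEqFinrank _ _
    have honb' : Orthonormal ℝ ⇑B0 := by rw [hB0]; exact onb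
    set B := B0.toOrthonormalBasis honb' with hBdef
    have hBcoe : ⇑B = ![e₁, e₂, e₃] := by
      rw [hBdef, Module.Basis.coe_toOrthonormalBasis, hB0]
    have hB_0 : B 0 = e₁ := by rw [hBcoe]; rfl
    have hB_1 : B 1 = e₂ := by rw [hBcoe]; rfl
    have hB_2 : B 2 = e₃ := by rw [hBcoe]; rfl
    have hRv3 : ∀ x y z : ℝ, B.repr.symm (v3 x y z) = x • e₁ + y • e₂ + z • e₃ := by
      intro x y z
      have hv3 : (v3 x y z : E3) = x • EuclideanSpace.single (0 : Fin 3) (1:ℝ)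
          + y • EuclideanSpace.single (1 : Fin 3) (1:ℝ)
          + z • EuclideanSpace.single (2 : Fin 3) (1:ℝ) := by
        ext i
        fin_cases i <;>
          simp [v3, PiLp.toLp_apply, EuclideanSpace.single_apply, PiLp.add_apply, PiLp.smul_apply]
      rw [hv3, map_add, map_add, LinearIsometryEquiv.map_smul, LinearIsometryEquiv.map_smul,
        LinearIsometryEquiv.map_smul, OrthonormalBasis.repr_symm_single,
        OrthonormalBasis.repr_symm_single, OrthonormalBasis.repr_symm_single,
        hB_0, hB_1, hB_2]
    -- scalar facts about lam and na
    have hs5 : Real.sqrt 5 ^ 2 = 5 := Real.sq_sqrt (by norm_num)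
    have hss : Real.sqrt 5 * Real.sqrt 5 = 5 := Real.mul_self_sqrt (by norm_num)
    have hs5nn : 0 ≤ Real.sqrt 5 := Real.sqrt_nonneg 5
    have hs5pos : 0 < Real.sqrt 5 := Real.sqrt_pos.mpr (by norm_num)
    have hs5ne : Real.sqrt 5 ≠ 0 := ne_of_gt hs5pos
    have hsig : lam * σ = Real.sqrt 5 * na := by
      have key : (lam - Real.sqrt 5 * na) * (lam + Real.sqrt 5 * na) = 0 := by
        linear_combination hlam2 - na^2*hs5
      have hmn : 0 < Real.sqrt 5 * na := mul_pos hs5pos hnapos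
      rw [hσ]
      split
      · next hpos =>
        have h2 : lam + Real.sqrt 5 * na ≠ 0 := ne_of_gt (by linarith)
        have := (mul_eq_zero.mp key).resolve_right h2
        rw [mul_one]; linarith
      · next hneg =>
        have hlneg : lam < 0 := lt_of_le_of_ne (not_lt.mp hneg) hlam
        have h1 : lam - Real.sqrt 5 * na ≠ 0 :=
          ne_of_lt (by linarith : lam - Real.sqrt 5 * na < 0)
        have := (mul_eq_zero.mp key).resolve_left h1
        linarith
    -- the height vector
    have hE' : E = (na⁻¹ * na⁻¹) • cross (q₂ - q₁) (q₄ - q₁) := by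
      rw [hE, he₁, he₂, pyr_cross_smul_left, pyr_cross_smul_right, smul_smul]
    have hcoef5 : 2*lam*(na/2*Real.sqrt 5)*σ*(na⁻¹*na⁻¹) = 5 := by
      calc 2*lam*(na/2*Real.sqrt 5)*σ*(na⁻¹*na⁻¹)
          = (lam*σ)*Real.sqrt 5*(na*(na⁻¹*na⁻¹)) := by ring
        _ = (Real.sqrt 5*na)*Real.sqrt 5*(na*(na⁻¹*na⁻¹)) := by rw [hsig]
        _ = (Real.sqrt 5*Real.sqrt 5)*((na*na⁻¹)*(na*na⁻¹)) := by ring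
        _ = 5 := by rw [hss, mul_inv_cancel₀ hnane]; ring
    have hL : (2*lam) • ((na/2 * Real.sqrt 5) • e₃) = (5:ℝ) • cross (q₂ - q₁) (q₄ - q₁) := by
      rw [he₃, hE', smul_smul, smul_smul, smul_smul, hcoef5]
    have hheight : (na/2 * Real.sqrt 5) • e₃
        = q₅ - q₁ - (2⁻¹:ℝ) • ((q₂ - q₁) + (q₄ - q₁)) := by
      apply smul_right_injective E3 h2l
      show (2*lam) • ((na/2 * Real.sqrt 5) • e₃)
          = (2*lam) • (q₅ - q₁ - (2⁻¹:ℝ) • ((q₂ - q₁) + (q₄ - q₁)))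
      rw [hL, hV]
    have hcoefpos : 0 < na/2*Real.sqrt 5 := mul_pos (by linarith) hs5pos
    have hcoefne : na/2*Real.sqrt 5 ≠ 0 := ne_of_gt hcoefpos
    have he₃w : e₃ = (na/2*Real.sqrt 5)⁻¹ • (q₅ - q₁ - (2⁻¹:ℝ) • ((q₂ - q₁) + (q₄ - q₁))) := by
      rw [← hheight, smul_smul, inv_mul_cancel₀ hcoefne, one_smul]
    -- final assembly
    refine ⟨na/2, by linarith, B.repr.symm, q₁, ?_, ?_, ?_, ?_, ?_⟩
    · rw [hRv3]
      simp
    · rw [hRv3, he₁, he₂, he₃w]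
      match_scalars <;> first
        | ring1
        | (field_simp [hs5ne, hnane]; try ring1)
    · rw [hRv3, he₁, he₂, he₃w]
      match_scalars <;> first
        | ring1
        | (field_simp [hs5ne, hnane]; try ring1)
    · rw [hRv3, he₁, he₂, he₃w]
      match_scalars <;> first
        | ring1
        | (field_simp [hs5ne, hnane]; try ring1)
    · rw [hRv3, he₁, he₂, he₃w]
      match_scalars <;> first
        | ring1
        | (field_simp [hs5ne, hnane]; try ring1)
end
end

section
/- Let q₁,…,q₆ ∈ ℝ³, not all equal, and suppose there exist λ ≠ 0 and c ∈ ℝ³ with X_i(q) = λ q_i + c for i = 1,…,6, where X is the octahedron gradient field. Then (q₁,…,q₆) is a regular octahedron: there exist r > 0, an orthogonal linear map R of ℝ³, and b ∈ ℝ³ such that q₁ = r·R(0,0,1) + b, q₂ = r·R(1,0,0) + b, q₃ = r·R(0,1,0) + b, q₄ = r·R(−1,0,0) + b, q₅ = r·R(0,−1,0) + b, and q₆ = r·R(0,0,−1) + b. -/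
open scoped RealInnerProductSpace

noncomputable section

lemma nu4_eq (a b c d : E3) : nu4 a b c d = cross (a - c) (b - d) := by
  ext i; fin_cases i <;>
    simp [nu4, cross, Pi.add_apply, Pi.sub_apply] <;> ring

lemma cross_neg_right (a b : E3) : cross a (-b) = - cross a b := by
  ext i; fin_cases i <;> simp [cross] <;> ring

lemma neg_cross_eq (a b : E3) : - cross a b = cross b a := by
  ext i; fin_cases i <;> simp [cross] <;> ring

lemma cross_swap_eq (a b : E3) : cross a b = - cross b a := by
  rw [neg_cross_eq]

lemma cross_smul_right (r : ℝ) (a b : E3) : cross a (r • b) = r • cross a b := by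
  ext i; fin_cases i <;> simp [cross] <;> ring

lemma inner_cross_left (a b : E3) : ⟪a, cross a b⟫ = 0 := by
  simp [cross, PiLp.inner_apply, RCLike.inner_apply, Fin.sum_univ_three]; ring

lemma inner_cross_right (a b : E3) : ⟪b, cross a b⟫ = 0 := by
  simp [cross, PiLp.inner_apply, RCLike.inner_apply, Fin.sum_univ_three]; ring

lemma cross_cross' (a b c : E3) : cross a (cross b c) = ⟪a,c⟫ • b - ⟪a,b⟫ • c := by
  ext i; fin_cases i <;>
    simp [cross, PiLp.inner_apply, RCLike.inner_apply, Fin.sum_univ_three] <;> ring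

lemma cross_zero_right (a : E3) : cross a 0 = 0 := by
  ext i; fin_cases i <;> simp [cross]

lemma cross_zero_left (a : E3) : cross 0 a = 0 := by
  ext i; fin_cases i <;> simp [cross]

set_option maxHeartbeats 2000000 in
theorem optimal_octahedron_is_regular (q₁ q₂ q₃ q₄ q₅ q₆ : E3)
    (hne : ¬ (q₁ = q₂ ∧ q₁ = q₃ ∧ q₁ = q₄ ∧ q₁ = q₅ ∧ q₁ = q₆))
    (lam : ℝ) (hlam : lam ≠ 0) (c : E3)
    (h₁ : (6 : ℝ)⁻¹ • nu4 q₂ q₃ q₄ q₅ = lam • q₁ + c)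
    (h₂ : (6 : ℝ)⁻¹ • nu4 q₁ q₅ q₆ q₃ = lam • q₂ + c)
    (h₃ : (6 : ℝ)⁻¹ • nu4 q₁ q₂ q₆ q₄ = lam • q₃ + c)
    (h₄ : (6 : ℝ)⁻¹ • nu4 q₁ q₃ q₆ q₅ = lam • q₄ + c)
    (h₅ : (6 : ℝ)⁻¹ • nu4 q₁ q₄ q₆ q₂ = lam • q₅ + c)
    (h₆ : (6 : ℝ)⁻¹ • nu4 q₂ q₅ q₄ q₃ = lam • q₆ + c) :
    ∃ (r : ℝ) (_ : 0 < r) (R : E3 ≃ₗᵢ[ℝ] E3) (b : E3),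
      q₁ = r • R (v3 0 0 1) + b ∧
      q₂ = r • R (v3 1 0 0) + b ∧
      q₃ = r • R (v3 0 1 0) + b ∧
      q₄ = r • R (v3 (-1) 0 0) + b ∧
      q₅ = r • R (v3 0 (-1) 0) + b ∧
      q₆ = r • R (v3 0 0 (-1)) + b := by
  rw [nu4_eq] at h₁ h₂ h₃ h₄ h₅ h₆
  rw [show q₅ - q₃ = -(q₃ - q₅) from by abel, cross_neg_right, neg_cross_eq] at h₂
  rw [show q₅ - q₃ = -(q₃ - q₅) from by abel, cross_neg_right] at h₆
  rw [show q₄ - q₂ = -(q₂ - q₄) from by abel, cross_neg_right] at h₅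
  rw [cross_swap_eq] at h₄
  -- now:
  -- h₁ : 6⁻¹ • cross (q₂-q₄) (q₃-q₅) = lam • q₁ + c
  -- h₂ : 6⁻¹ • cross (q₃-q₅) (q₁-q₆) = lam • q₂ + c
  -- h₃ : 6⁻¹ • cross (q₁-q₆) (q₂-q₄) = lam • q₃ + c
  -- h₄ : 6⁻¹ • -cross (q₃-q₅) (q₁-q₆) = lam • q₄ + c
  -- h₅ : 6⁻¹ • -cross (q₁-q₆) (q₂-q₄) = lam • q₅ + c
  -- h₆ : 6⁻¹ • -cross (q₂-q₄) (q₃-q₅) = lam • q₆ + c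
  obtain ⟨μ, hμdef⟩ : ∃ x : ℝ, x = 3 * lam := ⟨_, rfl⟩
  have hμ0 : μ ≠ 0 := by simp [hμdef, hlam]
  have E1 : cross (q₂-q₄) (q₃-q₅) = μ • (q₁ - q₆) := by
    rw [hμdef]; linear_combination (norm := module) (3:ℝ) • h₁ - (3:ℝ) • h₆
  have E2 : cross (q₃-q₅) (q₁-q₆) = μ • (q₂ - q₄) := by
    rw [hμdef]; linear_combination (norm := module) (3:ℝ) • h₂ - (3:ℝ) • h₄
  have E3' : cross (q₁-q₆) (q₂-q₄) = μ • (q₃ - q₅) := by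
    rw [hμdef]; linear_combination (norm := module) (3:ℝ) • h₃ - (3:ℝ) • h₅
  have c24 : lam • (q₂ + q₄) = lam • (q₁ + q₆) := by
    linear_combination (norm := module) h₁ + h₆ - h₂ - h₄
  have c35 : lam • (q₃ + q₅) = lam • (q₁ + q₆) := by
    linear_combination (norm := module) h₁ + h₆ - h₃ - h₅
  have e24 : q₂ + q₄ = q₁ + q₆ := smul_right_injective E3 hlam c24
  have e35 : q₃ + q₅ = q₁ + q₆ := smul_right_injective E3 hlam c35
  by_cases hu0 : q₁ - q₆ = 0
  · -- degenerate case: all points coincide, contradiction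
    exfalso
    have hv0 : q₂ - q₄ = 0 := by
      have := E2; rw [hu0, cross_zero_right] at this
      exact (smul_eq_zero.mp this.symm).resolve_left hμ0
    have hw0 : q₃ - q₅ = 0 := by
      have := E3'; rw [hu0, cross_zero_left] at this
      exact (smul_eq_zero.mp this.symm).resolve_left hμ0
    apply hne
    refine ⟨?_, ?_, ?_, ?_, ?_⟩
    · linear_combination (norm := module) ((2:ℝ)⁻¹) • hu0 - ((2:ℝ)⁻¹) • hv0 - ((2:ℝ)⁻¹) • e24
    · linear_combination (norm := module) ((2:ℝ)⁻¹) • hu0 - ((2:ℝ)⁻¹) • hw0 - ((2:ℝ)⁻¹) • e35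
    · linear_combination (norm := module) ((2:ℝ)⁻¹) • hu0 + ((2:ℝ)⁻¹) • hv0 - ((2:ℝ)⁻¹) • e24
    · linear_combination (norm := module) ((2:ℝ)⁻¹) • hu0 + ((2:ℝ)⁻¹) • hw0 - ((2:ℝ)⁻¹) • e35
    · linear_combination (norm := module) hu0
  · -- main case
    -- orthogonality
    have huv : ⟪q₁ - q₆, q₂ - q₄⟫ = 0 := by
      have h := inner_cross_right (q₃-q₅) (q₁-q₆)
      rw [E2, real_inner_smul_right] at h
      exact (mul_eq_zero.mp h).resolve_left hμ0
    have hvw : ⟪q₂ - q₄, q₃ - q₅⟫ = 0 := by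
      have h := inner_cross_right (q₁-q₆) (q₂-q₄)
      rw [E3', real_inner_smul_right] at h
      exact (mul_eq_zero.mp h).resolve_left hμ0
    have hwu : ⟪q₃ - q₅, q₁ - q₆⟫ = 0 := by
      have h := inner_cross_right (q₂-q₄) (q₃-q₅)
      rw [E1, real_inner_smul_right] at h
      exact (mul_eq_zero.mp h).resolve_left hμ0
    have hvu : ⟪q₂ - q₄, q₁ - q₆⟫ = 0 := by rw [real_inner_comm]; exact huv
    have huw : ⟪q₁ - q₆, q₃ - q₅⟫ = 0 := by rw [real_inner_comm]; exact hwu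
    have hwv : ⟪q₃ - q₅, q₂ - q₄⟫ = 0 := by rw [real_inner_comm]; exact hvw
    -- norms
    have tv : (μ * μ) • (q₁ - q₆) = ⟪q₂-q₄, q₂-q₄⟫ • (q₁ - q₆) := by
      have t := cross_cross' (q₂-q₄) (q₁-q₆) (q₂-q₄)
      rw [E3', cross_smul_right, E1, hvu, zero_smul, sub_zero, smul_smul] at t
      exact t
    have hvv : ⟪q₂-q₄, q₂-q₄⟫ = μ * μ :=
      ((smul_left_injective ℝ hu0) tv).symm
    have hv0 : q₂ - q₄ ≠ 0 := by
      intro h; rw [h, inner_zero_left] at hvv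
      exact hμ0 (mul_self_eq_zero.mp hvv.symm)
    have tw : (μ * μ) • (q₂ - q₄) = ⟪q₃-q₅, q₃-q₅⟫ • (q₂ - q₄) := by
      have t := cross_cross' (q₃-q₅) (q₂-q₄) (q₃-q₅)
      rw [E1, cross_smul_right, E2, hwv, zero_smul, sub_zero, smul_smul] at t
      exact t
    have hww : ⟪q₃-q₅, q₃-q₅⟫ = μ * μ :=
      ((smul_left_injective ℝ hv0) tw).symm
    have hw0 : q₃ - q₅ ≠ 0 := by
      intro h; rw [h, inner_zero_left] at hww
      exact hμ0 (mul_self_eq_zero.mp hww.symm)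
    have tu : (μ * μ) • (q₃ - q₅) = ⟪q₁-q₆, q₁-q₆⟫ • (q₃ - q₅) := by
      have t := cross_cross' (q₁-q₆) (q₃-q₅) (q₁-q₆)
      rw [E2, cross_smul_right, E3', huw, zero_smul, sub_zero, smul_smul] at t
      exact t
    have huu : ⟪q₁-q₆, q₁-q₆⟫ = μ * μ :=
      ((smul_left_injective ℝ hw0) tu).symm
    -- the orthonormal basis
    obtain ⟨m, hmdef⟩ : ∃ x : ℝ, x = |μ| := ⟨_, rfl⟩
    have hm0 : m ≠ 0 := by rw [hmdef]; exact abs_ne_zero.mpr hμ0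
    have hmm : m * m = μ * μ := by rw [hmdef]; exact abs_mul_abs_self μ
    have hmpos : 0 < m := by rw [hmdef]; exact abs_pos.mpr hμ0
    set f : Fin 3 → E3 :=
      ![m⁻¹ • (q₂ - q₄), m⁻¹ • (q₃ - q₅), m⁻¹ • (q₁ - q₆)] with hfdef
    have d1 : ⟪m⁻¹ • (q₂-q₄), m⁻¹ • (q₂-q₄)⟫ = 1 := by
      rw [real_inner_smul_left, real_inner_smul_right, hvv, ← hmm]; field_simp
    have d2 : ⟪m⁻¹ • (q₃-q₅), m⁻¹ • (q₃-q₅)⟫ = 1 := by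
      rw [real_inner_smul_left, real_inner_smul_right, hww, ← hmm]; field_simp
    have d3 : ⟪m⁻¹ • (q₁-q₆), m⁻¹ • (q₁-q₆)⟫ = 1 := by
      rw [real_inner_smul_left, real_inner_smul_right, huu, ← hmm]; field_simp
    have o12 : ⟪m⁻¹ • (q₂-q₄), m⁻¹ • (q₃-q₅)⟫ = 0 := by
      rw [real_inner_smul_left, real_inner_smul_right, hvw]; ring
    have o21 : ⟪m⁻¹ • (q₃-q₅), m⁻¹ • (q₂-q₄)⟫ = 0 := by
      rw [real_inner_smul_left, real_inner_smul_right, hwv]; ring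
    have o13 : ⟪m⁻¹ • (q₂-q₄), m⁻¹ • (q₁-q₆)⟫ = 0 := by
      rw [real_inner_smul_left, real_inner_smul_right, hvu]; ring
    have o31 : ⟪m⁻¹ • (q₁-q₆), m⁻¹ • (q₂-q₄)⟫ = 0 := by
      rw [real_inner_smul_left, real_inner_smul_right, huv]; ring
    have o23 : ⟪m⁻¹ • (q₃-q₅), m⁻¹ • (q₁-q₆)⟫ = 0 := by
      rw [real_inner_smul_left, real_inner_smul_right, hwu]; ring
    have o32 : ⟪m⁻¹ • (q₁-q₆), m⁻¹ • (q₃-q₅)⟫ = 0 := by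
      rw [real_inner_smul_left, real_inner_smul_right, huw]; ring
    have hon : Orthonormal ℝ f := by
      rw [orthonormal_iff_ite]
      intro i j
      fin_cases i <;> fin_cases j <;>
        simp only [hfdef, Matrix.cons_val_zero, Matrix.cons_val_one, Matrix.head_cons,
          Matrix.cons_val_two, Matrix.tail_cons] <;>
        norm_num
      · have := real_inner_self_eq_norm_sq (m⁻¹ • (q₂ - q₄)); left; nlinarith [norm_nonneg (m⁻¹ • (q₂ - q₄))]
      · exact o12
      · exact o13
      · exact o21
      · have := real_inner_self_eq_norm_sq (m⁻¹ • (q₃ - q₅)); left; nlinarith [norm_nonneg (m⁻¹ • (q₃ - q₅))]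
      · exact o23
      · exact o31
      · exact o32
      · have := real_inner_self_eq_norm_sq (m⁻¹ • (q₁ - q₆)); left; nlinarith [norm_nonneg (m⁻¹ • (q₁ - q₆))]
    have hsp : ⊤ ≤ Submodule.span ℝ (Set.range f) := by
      refine (hon.linearIndependent.span_eq_top_of_card_eq_finrank ?_).ge
      simp [finrank_euclideanSpace]
    set B := OrthonormalBasis.mk hon hsp with hBdef
    refine ⟨m / 2, half_pos hmpos, B.repr.symm, (2:ℝ)⁻¹ • (q₁ + q₆), ?_, ?_, ?_, ?_, ?_, ?_⟩
    · rw [show v3 0 0 1 = EuclideanSpace.single (2 : Fin 3) (1:ℝ) from by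
        ext i; fin_cases i <;> simp [v3, EuclideanSpace.single_apply]]
      rw [B.repr_symm_single, hBdef, OrthonormalBasis.coe_mk, hfdef]
      simp only [Matrix.cons_val_two, Matrix.tail_cons, Matrix.head_cons]
      match_scalars <;> field_simp [hm0] <;> ring
    · rw [show v3 1 0 0 = EuclideanSpace.single (0 : Fin 3) (1:ℝ) from by
        ext i; fin_cases i <;> simp [v3, EuclideanSpace.single_apply]]
      rw [B.repr_symm_single, hBdef, OrthonormalBasis.coe_mk, hfdef]
      simp only [Matrix.cons_val_zero]
      rw [← e24]
      match_scalars <;> field_simp [hm0] <;> ring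
    · rw [show v3 0 1 0 = EuclideanSpace.single (1 : Fin 3) (1:ℝ) from by
        ext i; fin_cases i <;> simp [v3, EuclideanSpace.single_apply]]
      rw [B.repr_symm_single, hBdef, OrthonormalBasis.coe_mk, hfdef]
      simp only [Matrix.cons_val_one, Matrix.head_cons, Matrix.cons_val_zero]
      rw [← e35]
      match_scalars <;> field_simp [hm0] <;> ring
    · rw [show v3 (-1) 0 0 = -EuclideanSpace.single (0 : Fin 3) (1:ℝ) from by
        ext i; fin_cases i <;> simp [v3, EuclideanSpace.single_apply]]
      rw [map_neg, B.repr_symm_single, hBdef, OrthonormalBasis.coe_mk, hfdef]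
      simp only [Matrix.cons_val_zero]
      rw [← e24]
      match_scalars <;> field_simp [hm0] <;> ring
    · rw [show v3 0 (-1) 0 = -EuclideanSpace.single (1 : Fin 3) (1:ℝ) from by
        ext i; fin_cases i <;> simp [v3, EuclideanSpace.single_apply]]
      rw [map_neg, B.repr_symm_single, hBdef, OrthonormalBasis.coe_mk, hfdef]
      simp only [Matrix.cons_val_one, Matrix.head_cons, Matrix.cons_val_zero]
      rw [← e35]
      match_scalars <;> field_simp [hm0] <;> ring
    · rw [show v3 0 0 (-1) = -EuclideanSpace.single (2 : Fin 3) (1:ℝ) from by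
        ext i; fin_cases i <;> simp [v3, EuclideanSpace.single_apply]]
      rw [map_neg, B.repr_symm_single, hBdef, OrthonormalBasis.coe_mk, hfdef]
      simp only [Matrix.cons_val_two, Matrix.tail_cons, Matrix.head_cons]
      match_scalars <;> field_simp [hm0] <;> ring
end
end

section
/- Let a, h > 0 and let q be the symmetric prism q₁ = (0,0,0), q₂ = (a,0,0), q₃ = (a/2, a√3/2, 0), q₄ = (0,0,h), q₅ = (a,0,h), q₆ = (a/2, a√3/2, h). Suppose q is X-optimal for the prism gradient field X, i.e. there exist λ ≠ 0 and c ∈ ℝ³ with X_i(q) = λ q_i + c for i = 1,…,6. Then h/a = √(2/3). -/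
open scoped RealInnerProductSpace

noncomputable section

theorem optimal_symmetric_prism_height (a h : ℝ) (ha : 0 < a) (hh : 0 < h)
    (q₁ q₂ q₃ q₄ q₅ q₆ : E3)
    (hq₁ : q₁ = v3 0 0 0) (hq₂ : q₂ = v3 a 0 0)
    (hq₃ : q₃ = v3 (a / 2) (a * Real.sqrt 3 / 2) 0)
    (hq₄ : q₄ = v3 0 0 h) (hq₅ : q₅ = v3 a 0 h)
    (hq₆ : q₆ = v3 (a / 2) (a * Real.sqrt 3 / 2) h)
    (lam : ℝ) (hlam : lam ≠ 0) (c : E3)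
    (h₁ : (1 / 2 : ℝ) • (nu3 q₃ q₂ q₄ + nu5 q₂ q₅ q₄ q₆ q₃) = lam • q₁ + c)
    (h₂ : (1 / 2 : ℝ) • (nu3 q₁ q₃ q₅ + nu5 q₃ q₆ q₅ q₄ q₁) = lam • q₂ + c)
    (h₃ : (1 / 2 : ℝ) • (nu3 q₂ q₁ q₆ + nu5 q₁ q₄ q₆ q₅ q₂) = lam • q₃ + c)
    (h₄ : (1 / 2 : ℝ) • (nu3 q₅ q₆ q₁ + nu5 q₆ q₃ q₁ q₂ q₅) = lam • q₄ + c)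
    (h₅ : (1 / 2 : ℝ) • (nu3 q₆ q₄ q₂ + nu5 q₄ q₁ q₂ q₃ q₆) = lam • q₅ + c)
    (h₆ : (1 / 2 : ℝ) • (nu3 q₄ q₅ q₃ + nu5 q₅ q₂ q₃ q₁ q₄) = lam • q₆ + c) :
    h / a = Real.sqrt (2 / 3) := by
  subst hq₁ hq₂ hq₃ hq₄ hq₅ hq₆
  have e1 := congrArg (fun v : E3 => v 0) h₁
  have e2 := congrArg (fun v : E3 => v 0) h₂
  have f1 := congrArg (fun v : E3 => v 2) h₁
  have f4 := congrArg (fun v : E3 => v 2) h₄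
  simp only [nu3, nu5, cross, v3, PiLp.add_apply, PiLp.smul_apply, smul_eq_mul, PiLp.toLp_apply,
    Matrix.cons_val_zero, Matrix.cons_val_one, Matrix.head_cons, Matrix.cons_val_two,
    Matrix.tail_cons] at e1 e2 f1 f4
  have key1 : lam * a = 3 / 2 * Real.sqrt 3 * a * h := by linear_combination e1 - e2
  have key2 : lam * h = Real.sqrt 3 * a ^ 2 := by linear_combination f1 - f4
  have g2 : (Real.sqrt 3 * a) * (3 / 2 * h ^ 2) = (Real.sqrt 3 * a) * a ^ 2 := by
    linear_combination a * key2 - h * key1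
  have hne : Real.sqrt 3 * a ≠ 0 := by positivity
  have hh2 : 3 / 2 * h ^ 2 = a ^ 2 := mul_left_cancel₀ hne g2
  have hratio : (h / a) ^ 2 = 2 / 3 := by
    rw [div_pow]
    rw [div_eq_iff (by positivity)]
    linarith
  rw [← hratio, Real.sqrt_sq (by positivity)]
end
end

section
/- Let q₁, q₂, q₃, q₄ ∈ ℝ³ and suppose there exists a common vector c ∈ ℝ³ with ν(q₄,q₃,q₂) = ν(q₄,q₁,q₃) = ν(q₄,q₂,q₁) = ν(q₁,q₂,q₃) = c. Then c = 0 and the four points q₁, q₂, q₃, q₄ are collinear. Conversely, if q₁, q₂, q₃, q₄ are collinear, then ν(q₄,q₃,q₂) = ν(q₄,q₁,q₃) = ν(q₄,q₂,q₁) = ν(q₁,q₂,q₃) = 0. (Hence the singular tetrahedra with vanishing volume are exactly the collinear ones.) -/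
open scoped RealInnerProductSpace

noncomputable section

lemma nu3_eq_cross (a b c : E3) : nu3 a b c = cross (b - a) (c - a) := by
  ext i
  fin_cases i <;>
    simp [nu3, cross, PiLp.add_apply, PiLp.sub_apply] <;> ring

lemma cross_smul_smul (r s : ℝ) (v : E3) : cross (r • v) (s • v) = 0 := by
  ext i
  fin_cases i <;> simp [cross, PiLp.smul_apply, smul_eq_mul] <;> ring

lemma exists_smul_of_cross_eq_zero {u v : E3} (hu : u ≠ 0) (h : cross u v = 0) :
    ∃ t : ℝ, v = t • u := by
  have e0 : u 1 * v 2 - u 2 * v 1 = 0 := by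
    have := congrArg (fun w : E3 => w 0) h; simpa [cross] using this
  have e1 : u 2 * v 0 - u 0 * v 2 = 0 := by
    have := congrArg (fun w : E3 => w 1) h; simpa [cross] using this
  have e2 : u 0 * v 1 - u 1 * v 0 = 0 := by
    have := congrArg (fun w : E3 => w 2) h; simpa [cross] using this
  by_cases h0 : u 0 ≠ 0
  · refine ⟨v 0 / u 0, ?_⟩
    ext j
    fin_cases j <;> simp [PiLp.smul_apply, smul_eq_mul] <;> field_simp <;> linarith
  by_cases h1 : u 1 ≠ 0
  · refine ⟨v 1 / u 1, ?_⟩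
    ext j
    fin_cases j <;> simp [PiLp.smul_apply, smul_eq_mul] <;> field_simp <;> linarith
  by_cases h2 : u 2 ≠ 0
  · refine ⟨v 2 / u 2, ?_⟩
    ext j
    fin_cases j <;> simp [PiLp.smul_apply, smul_eq_mul] <;> field_simp <;> linarith
  · exfalso
    push_neg at h0 h1 h2
    apply hu
    ext j
    fin_cases j <;> simpa

lemma collinear_of_nu3 {a b c : E3} (h : nu3 a b c = 0) :
    Collinear ℝ ({a, b, c} : Set E3) := by
  rw [nu3_eq_cross] at h
  by_cases hab : b - a = 0
  · have hb : b = a := by rwa [sub_eq_zero] at hab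
    subst hb
    simpa [Set.insert_comm] using collinear_pair ℝ b c
  · obtain ⟨t, ht⟩ := exists_smul_of_cross_eq_zero hab h
    rw [collinear_iff_of_mem (Set.mem_insert a _)]
    refine ⟨b - a, ?_⟩
    rintro p (rfl | rfl | rfl)
    · exact ⟨0, by simp⟩
    · exact ⟨1, by simp⟩
    · exact ⟨t, by rw [← ht]; simp⟩

lemma nu3_of_collinear {a b c : E3} (h : Collinear ℝ ({a, b, c} : Set E3)) :
    nu3 a b c = 0 := by
  rw [collinear_iff_of_mem (Set.mem_insert a _)] at h
  obtain ⟨v, hv⟩ := h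
  obtain ⟨rb, hb⟩ := hv b (by simp)
  obtain ⟨rc, hc⟩ := hv c (by simp)
  rw [nu3_eq_cross]
  have hb' : b - a = rb • v := by rw [hb]; simp
  have hc' : c - a = rc • v := by rw [hc]; simp
  rw [hb', hc', cross_smul_smul]

theorem level_zero_singular_tetrahedra_are_collinear (q₁ q₂ q₃ q₄ : E3) :
    (∀ c : E3,
      nu3 q₄ q₃ q₂ = c → nu3 q₄ q₁ q₃ = c → nu3 q₄ q₂ q₁ = c → nu3 q₁ q₂ q₃ = c →
        c = 0 ∧ Collinear ℝ ({q₁, q₂, q₃, q₄} : Set E3)) ∧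
    (Collinear ℝ ({q₁, q₂, q₃, q₄} : Set E3) →
      nu3 q₄ q₃ q₂ = 0 ∧ nu3 q₄ q₁ q₃ = 0 ∧ nu3 q₄ q₂ q₁ = 0 ∧ nu3 q₁ q₂ q₃ = 0) := by

  constructor
  · intro c h1 h2 h3 h4
    have hsum : nu3 q₄ q₃ q₂ + nu3 q₄ q₁ q₃ + nu3 q₄ q₂ q₁ + nu3 q₁ q₂ q₃ = 0 := by
      ext i
      fin_cases i <;> simp [nu3, cross, PiLp.add_apply] <;> ring
    rw [h1, h2, h3, h4] at hsum
    have hc : c = 0 := by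
      ext i
      have := congrArg (fun w : E3 => w i) hsum
      simp [PiLp.add_apply] at this ⊢
      linarith
    subst hc
    refine ⟨rfl, ?_⟩
    by_cases h12 : q₁ = q₂
    · subst h12
      have := collinear_of_nu3 h2
      refine this.subset ?_
      intro x hx
      simp at hx ⊢
      tauto
    · have hA : Collinear ℝ ({q₁, q₂, q₃} : Set E3) := collinear_of_nu3 h4
      have hB : Collinear ℝ ({q₄, q₂, q₁} : Set E3) := collinear_of_nu3 h3
      have hq3 : q₃ ∈ line[ℝ, q₁, q₂] :=
        hA.mem_affineSpan_of_mem_of_ne (by simp) (by simp) (by simp) h12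
      have hq4 : q₄ ∈ line[ℝ, q₁, q₂] :=
        hB.mem_affineSpan_of_mem_of_ne (by simp) (by simp) (by simp) h12
      have := collinear_insert_insert_of_mem_affineSpan_pair hq3 hq4
      refine this.subset ?_
      intro x hx
      simp at hx ⊢
      tauto
  · intro h
    refine ⟨?_, ?_, ?_, ?_⟩ <;>
      · apply nu3_of_collinear
        refine h.subset ?_
        intro x hx
        simp at hx ⊢
        tauto
end
end
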